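/- arXiv:1103.1585 — 6 statements merged into one kernel-verified Lean document; each statement's English description precedes it below -/
import Mathlib

section
/- The partition function satisfies MacMahon's recurrence: for n ≥ 1, Σ_{m ∈ ℤ} (−1)^m p(n − m(3m−1)/2) = 0, i.e., p(n) = p(n−1) + p(n−2) − p(n−5) − p(n−7) + p(n−12) + p(n−15) − ···, where p(k) = 0 for k < 0 and the sum is over all integers m with m(3m−1)/2 ≤ n. -/
/-- The partition function, extended by `0` to negative integer arguments. -/
noncomputable def partitionExt (k : ℤ) : ℤ :=
  if 0 ≤ k then (Fintype.card (Nat.Partition k.toNat) : ℤ) else 0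

namespace MacMahon

open Multiset

/-- generalized pentagonal number -/
def pent (m : ℤ) : ℤ := m * (3 * m - 1) / 2

lemma two_pent (m : ℤ) : 2 * pent m = m * (3 * m - 1) := by
  have h : (2:ℤ) ∣ m * (3 * m - 1) := by
    rcases Int.even_or_odd m with ⟨k, hk⟩ | ⟨k, hk⟩
    · exact ⟨k * (3 * m - 1), by rw [hk]; ring⟩
    · exact ⟨m * (3 * k + 1), by rw [hk]; ring⟩
  rw [pent, Int.mul_ediv_cancel' h]

lemma pent_succ (m : ℤ) : pent (m + 1) = pent m + 3 * m + 1 := by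
  have h2 : 2 * pent (m + 1) = 2 * pent m + (6 * m + 2) := by
    rw [two_pent, two_pent]; ring
  linarith

lemma pent_pred (m : ℤ) : pent (m - 1) = pent m - (3 * m - 2) := by
  have h := pent_succ (m - 1)
  have h0 : m - 1 + 1 = m := by ring
  rw [h0] at h
  linarith

lemma pent_nonneg (m : ℤ) : 0 ≤ pent m := by
  have h := two_pent m
  rcases le_or_gt m 0 with hm | hm
  · nlinarith
  · nlinarith

lemma natAbs_le_pent (m : ℤ) : (m.natAbs : ℤ) ≤ pent m := by
  have h := two_pent m
  rcases le_or_gt m 0 with hm | hm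
  · have h1 : (m.natAbs : ℤ) = -m := by omega
    rcases eq_or_lt_of_le hm with rfl | hm'
    · simp [pent]
    · nlinarith [mul_pos (by linarith : (0:ℤ) < -m) (by linarith : (0:ℤ) < -(3*m+1))]
  · have : (m.natAbs : ℤ) = m := by omega
    nlinarith

/-- max of a multiset of naturals belongs to it (if nonempty) -/
lemma sup_mem {s : Multiset ℕ} (h : s ≠ 0) : s.sup ∈ s := by
  induction s using Multiset.induction with
  | empty => exact absurd rfl h
  | cons a t ih =>
    rw [Multiset.sup_cons]
    rcases eq_or_ne t 0 with rfl | ht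
    · simp
    · rcases le_total a t.sup with h1 | h1
      · rw [sup_eq_right.mpr h1]
        exact Multiset.mem_cons_of_mem (ih ht)
      · rw [sup_eq_left.mpr h1]; exact Multiset.mem_cons_self _ _

lemma sum_map_pred {s : Multiset ℕ} (h : ∀ x ∈ s, 0 < x) :
    (s.map (· - 1)).sum + Multiset.card s = s.sum := by
  induction s using Multiset.induction with
  | empty => simp
  | cons a t ih =>
    have ha : 0 < a := h a (Multiset.mem_cons_self _ _)
    have := ih (fun x hx => h x (Multiset.mem_cons_of_mem hx))
    simp only [Multiset.map_cons, Multiset.sum_cons, Multiset.card_cons]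
    omega

lemma sum_map_succ (s : Multiset ℕ) :
    (s.map (· + 1)).sum = s.sum + Multiset.card s := by
  induction s using Multiset.induction with
  | empty => simp
  | cons a t ih => simp only [Multiset.map_cons, Multiset.sum_cons, Multiset.card_cons, ih]; omega

lemma sum_filter_pos (s : Multiset ℕ) : (s.filter (0 < ·)).sum = s.sum := by
  conv_rhs => rw [← Multiset.filter_add_not (0 < ·) s]
  rw [Multiset.sum_add]
  have : (s.filter (fun a => ¬ 0 < a)).sum = 0 := by
    apply Multiset.sum_eq_zero
    intro x hx
    have := Multiset.of_mem_filter hx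
    omega
  omega


/-- The Bressoud–Zeilberger involution, on raw data. -/
def psiCore (n : ℕ) (m : ℤ) (s : Multiset ℕ) : ℤ × Multiset ℕ :=
  if (s.sup : ℤ) + 3 * m ≤ Multiset.card s then
    (m + 1, ((((Multiset.card s : ℤ) - 3 * m - 1).toNat ::ₘ s.map (· - 1)).filter (0 < ·)))
  else
    (m - 1, (s.erase s.sup).map (· + 1) +
      Multiset.replicate (((n : ℤ) - pent (m - 1)).toNat -
        ((s.erase s.sup).sum + Multiset.card (s.erase s.sup))) 1)

def Valid (n : ℕ) (m : ℤ) (s : Multiset ℕ) : Prop :=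
  (∀ x ∈ s, 0 < x) ∧ (s.sum : ℤ) = (n : ℤ) - pent m

lemma psiCore_caseA (n : ℕ) (hn : 1 ≤ n) (m : ℤ) (s : Multiset ℕ)
    (hv : Valid n m s) (hA : (s.sup : ℤ) + 3 * m ≤ Multiset.card s) :
    (psiCore n m s).1 = m + 1 ∧ Valid n (m + 1) (psiCore n m s).2 ∧
      psiCore n (m + 1) (psiCore n m s).2 = (m, s) := by
  obtain ⟨hpos, hsum⟩ := hv
  have h1 : psiCore n m s =
      (m + 1, ((((Multiset.card s : ℤ) - 3 * m - 1).toNat ::ₘ s.map (· - 1)).filter (0 < ·))) := by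
    rw [psiCore, if_pos hA]
  -- strict inequality 3m + 1 ≤ t
  have hm0 : 3 * m + 1 ≤ (Multiset.card s : ℤ) := by
    rcases eq_or_ne s 0 with rfl | hs
    · have hps : pent m = (n : ℤ) := by
        have h0 : ((0:ℕ) : ℤ) = (n : ℤ) - pent m := by simpa using hsum
        omega
      have hmne : m ≠ 0 := by
        rintro rfl
        rw [show pent 0 = 0 from rfl] at hps
        omega
      simp only [Multiset.sup_zero, Multiset.card_zero] at hA ⊢
      push_cast at hA ⊢
      rcases lt_or_gt_of_ne hmne with h | h <;> omega
    · have hL1 : 1 ≤ s.sup := hpos _ (sup_mem hs)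
      omega
  set a : ℕ := (((Multiset.card s : ℤ)) - 3 * m - 1).toNat with ha_def
  have ha : (a : ℤ) = (Multiset.card s : ℤ) - 3 * m - 1 := Int.toNat_of_nonneg (by omega)
  set X : Multiset ℕ := s.map (· - 1) with hX_def
  set A : Multiset ℕ := (a ::ₘ X).filter (0 < ·) with hA_def
  have hXsum : X.sum + Multiset.card s = s.sum := sum_map_pred hpos
  have hXcard : Multiset.card X = Multiset.card s := by simp [hX_def]
  have hAsum : A.sum = a + X.sum := by
    rw [hA_def, sum_filter_pos, Multiset.sum_cons]
  have hAvalid : Valid n (m + 1) A := by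
    constructor
    · intro x hx; exact (Multiset.mem_filter.mp hx).2
    · rw [pent_succ]
      have h2 : (A.sum : ℤ) = (a : ℤ) + X.sum := by exact_mod_cast hAsum
      have h3 : (X.sum : ℤ) + (Multiset.card s : ℤ) = s.sum := by exact_mod_cast hXsum
      omega
  refine ⟨by rw [h1], by rw [h1]; exact hAvalid, ?_⟩
  rw [h1]
  -- compute sup of A
  have hsupA : A.sup = a := by
    apply le_antisymm
    · rw [Multiset.sup_le]
      intro b hb
      have hb' := (Multiset.mem_filter.mp hb).1
      rcases Multiset.mem_cons.mp hb' with rfl | hbX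
      · exact le_rfl
      · obtain ⟨y, hy, rfl⟩ := Multiset.mem_map.mp hbX
        have h4 : y ≤ s.sup := Multiset.le_sup hy
        omega
    · rcases Nat.eq_zero_or_pos a with ha0 | ha0
      · omega
      · exact Multiset.le_sup (Multiset.mem_filter.mpr ⟨Multiset.mem_cons_self _ _, ha0⟩)
  have hAcard : Multiset.card A ≤ Multiset.card s + 1 := by
    have := Multiset.card_le_card (Multiset.filter_le (fun x => 0 < x) (a ::ₘ X))
    simpa [hXcard] using this
  have hB' : ¬ ((A.sup : ℤ) + 3 * (m + 1) ≤ Multiset.card A) := by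
    rw [hsupA]
    omega
  rw [psiCore, if_neg hB']
  -- the pieces
  have hm11 : m + 1 - 1 = m := by ring
  have herase : A.erase A.sup = X.filter (0 < ·) := by
    rw [hsupA, hA_def, Multiset.filter_cons]
    rcases Nat.eq_zero_or_pos a with ha0 | ha0
    · rw [if_neg (by omega), zero_add]
      apply Multiset.erase_of_notMem
      intro hmem
      have := (Multiset.mem_filter.mp hmem).2
      omega
    · rw [if_pos ha0, Multiset.singleton_add, Multiset.erase_cons_head]
  set Q : Multiset ℕ := s.filter (1 < ·) with hQ_def
  set c : ℕ := s.count 1 with hc_def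
  have hQpos : ∀ x ∈ Q, 0 < x := fun x hx => by
    have := (Multiset.mem_filter.mp hx).2; omega
  have hPQ : X.filter (0 < ·) = Q.map (· - 1) := by
    rw [hX_def, Multiset.filter_map]
    congr 1
    apply Multiset.filter_congr
    intro x hx
    simp only [Function.comp]
    omega
  have hmapQ : (Q.map (· - 1)).map (· + 1) = Q := by
    rw [Multiset.map_map]
    have : Multiset.map ((· + 1) ∘ (· - 1)) Q = Multiset.map id Q := by
      apply Multiset.map_congr rfl
      intro x hx
      have := (Multiset.mem_filter.mp hx).2
      simp only [Function.comp, id]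
      omega
    rw [this, Multiset.map_id]
  have hQc : Q + Multiset.replicate c 1 = s := by
    have h5 : s.filter (fun x => ¬ 1 < x) = Multiset.replicate c 1 := by
      have h6 : s.filter (fun x => ¬ 1 < x) = s.filter (· = 1) := by
        apply Multiset.filter_congr
        intro x hx
        have := hpos x hx
        constructor
        · intro h; omega
        · intro h; omega
      rw [h6, Multiset.filter_eq']
    rw [← h5, Multiset.filter_add_not]
  -- sums and cards of Q
  have hQsum : Q.sum + c = s.sum := by
    have := congrArg Multiset.sum hQc
    simpa [Multiset.sum_replicate] using this
  have hQpredsum : ((Q.map (· - 1)).sum) + Multiset.card Q = Q.sum := sum_map_pred hQpos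
  have hQpredcard : Multiset.card (Q.map (· - 1)) = Multiset.card Q := by simp
  -- k' = c
  have hk' : ((n : ℤ) - pent (m + 1 - 1)).toNat -
      ((A.erase A.sup).sum + Multiset.card (A.erase A.sup)) = c := by
    rw [hm11, herase, hPQ, hQpredcard]
    have h7 : ((n : ℤ) - pent m).toNat = s.sum := by
      rw [← hsum, Int.toNat_natCast]
    rw [h7]
    omega
  rw [hk', herase, hPQ, hmapQ, hQc, hm11]


lemma psiCore_caseB (n : ℕ) (hn : 1 ≤ n) (m : ℤ) (s : Multiset ℕ)
    (hv : Valid n m s) (hB : ¬ ((s.sup : ℤ) + 3 * m ≤ Multiset.card s)) :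
    (psiCore n m s).1 = m - 1 ∧ Valid n (m - 1) (psiCore n m s).2 ∧
      psiCore n (m - 1) (psiCore n m s).2 = (m, s) := by
  obtain ⟨hpos, hsum⟩ := hv
  have hpp : pent (m - 1) = pent m - (3 * m - 2) := pent_pred m
  have hm11 : m - 1 + 1 = m := by ring
  rcases eq_or_ne s 0 with rfl | hs0
  · -- empty partition: pent m = n, m ≥ 1, output is 1^(3m-2)
    have hps : pent m = (n : ℤ) := by
      have h0 : ((0:ℕ) : ℤ) = (n : ℤ) - pent m := by simpa using hsum
      omega
    simp only [Multiset.sup_zero, Multiset.card_zero, Nat.bot_eq_zero, Nat.cast_zero] at hB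
    have hm1 : 1 ≤ m := by omega
    have h1 : psiCore n m 0 = (m - 1,
        Multiset.replicate (((n : ℤ) - pent (m - 1)).toNat) 1) := by
      rw [psiCore, if_neg (by
        simp only [Multiset.sup_zero, Multiset.card_zero, Nat.bot_eq_zero, Nat.cast_zero]
        omega)]
      simp
    set k : ℕ := ((n : ℤ) - pent (m - 1)).toNat with hk_def
    have hk : (k : ℤ) = 3 * m - 2 := by
      rw [hk_def]
      rw [Int.toNat_of_nonneg (by omega)]
      omega
    have hval : Valid n (m - 1) (Multiset.replicate k 1) := by
      constructor
      · intro x hx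
        rw [Multiset.eq_of_mem_replicate hx]; norm_num
      · rw [Multiset.sum_replicate, smul_eq_mul, mul_one]
        omega
    refine ⟨by rw [h1], by rw [h1]; exact hval, ?_⟩
    rw [h1]
    have hsupk : (Multiset.replicate k (1:ℕ)).sup ≤ 1 := by
      rw [Multiset.sup_le]
      intro b hb
      rw [Multiset.eq_of_mem_replicate hb]
    have hcardk : Multiset.card (Multiset.replicate k 1) = k := Multiset.card_replicate _ _
    have hA' : (((Multiset.replicate k (1:ℕ)).sup : ℕ) : ℤ) + 3 * (m - 1) ≤
        Multiset.card (Multiset.replicate k (1:ℕ)) := by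
      rw [hcardk]
      have h8 : (((Multiset.replicate k (1:ℕ)).sup : ℕ) : ℤ) ≤ 1 := by exact_mod_cast hsupk
      omega
    rw [psiCore, if_pos hA']
    refine Prod.ext hm11 ?_
    simp only [hcardk, hk]
    rw [Multiset.map_replicate]
    norm_num
    refine ⟨?_, fun a ha => ?_⟩
    · have : ((3 * m - 2 - 3 * (m - 1)).toNat : ℤ) = 1 := by
        rw [Int.toNat_of_nonneg (by omega)]; omega
      omega
    · exact Multiset.eq_of_mem_replicate ha
  · -- nonempty partition
    have hLmem : s.sup ∈ s := sup_mem hs0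
    have hL1 : 1 ≤ s.sup := hpos _ hLmem
    set L : ℕ := s.sup with hL_def
    set e : Multiset ℕ := s.erase s.sup with he_def
    have hcons : L ::ₘ e = s := Multiset.cons_erase hLmem
    have hsum2 : L + e.sum = s.sum := by rw [← hcons, Multiset.sum_cons]
    have hcard2 : Multiset.card e + 1 = Multiset.card s := by
      rw [← hcons, Multiset.card_cons]
    have hepos : ∀ x ∈ e, 0 < x := fun x hx => hpos x (Multiset.mem_of_mem_erase hx)
    have hL3m : (Multiset.card s : ℤ) < (L : ℤ) + 3 * m := by
      push_cast at hB ⊢; omega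
    have hTnn : 0 ≤ (n : ℤ) - pent (m - 1) := by omega
    have hT' : ((((n : ℤ) - pent (m - 1)).toNat : ℕ) : ℤ) = (n : ℤ) - pent (m - 1) :=
      Int.toNat_of_nonneg hTnn
    set k : ℕ := ((n : ℤ) - pent (m - 1)).toNat - (e.sum + Multiset.card e) with hk_def
    have hesum_le : (e.sum : ℤ) + Multiset.card e ≤ (n : ℤ) - pent (m - 1) := by omega
    have hk : (k : ℤ) = ((n : ℤ) - pent (m - 1)) - (e.sum + Multiset.card e) := by
      rw [hk_def]
      omega
    set B : Multiset ℕ := e.map (· + 1) + Multiset.replicate k 1 with hB_def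
    have h1 : psiCore n m s = (m - 1, B) := by rw [psiCore, if_neg hB]
    have hBsum : B.sum = (e.sum + Multiset.card e) + k := by
      rw [hB_def, Multiset.sum_add, sum_map_succ, Multiset.sum_replicate, smul_eq_mul, mul_one]
    have hBval : Valid n (m - 1) B := by
      constructor
      · intro x hx
        rcases Multiset.mem_add.mp hx with hx' | hx'
        · obtain ⟨y, _, rfl⟩ := Multiset.mem_map.mp hx'
          omega
        · rw [Multiset.eq_of_mem_replicate hx']; norm_num
      · rw [hBsum]; omega
    refine ⟨by rw [h1], by rw [h1]; exact hBval, ?_⟩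
    rw [h1]
    have hBcard : (Multiset.card B : ℤ) = (L : ℤ) + 3 * m - 2 := by
      rw [hB_def]
      simp only [Multiset.card_add, Multiset.card_map, Multiset.card_replicate]
      omega
    have hBsup : B.sup ≤ L + 1 := by
      rw [Multiset.sup_le]
      intro b hb
      rcases Multiset.mem_add.mp hb with hb' | hb'
      · obtain ⟨y, hy, rfl⟩ := Multiset.mem_map.mp hb'
        have : y ≤ s.sup := Multiset.le_sup (Multiset.mem_of_mem_erase hy)
        omega
      · rw [Multiset.eq_of_mem_replicate hb']; omega
    have hA' : ((B.sup : ℤ)) + 3 * (m - 1) ≤ Multiset.card B := by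
      have : (B.sup : ℤ) ≤ (L : ℤ) + 1 := by exact_mod_cast hBsup
      omega
    rw [psiCore, if_pos hA']
    refine Prod.ext hm11 ?_
    have ha' : ((Multiset.card B : ℤ) - 3 * (m - 1) - 1).toNat = L := by
      have h9 : (Multiset.card B : ℤ) - 3 * (m - 1) - 1 = (L : ℤ) := by omega
      rw [h9, Int.toNat_natCast]
    have hmapB : B.map (· - 1) = e + Multiset.replicate k 0 := by
      rw [hB_def, Multiset.map_add, Multiset.map_map, Multiset.map_replicate]
      congr 1
      · have : Multiset.map ((· - 1) ∘ (· + 1)) e = Multiset.map id e := by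
          apply Multiset.map_congr rfl
          intro x _
          simp [Function.comp]
        rw [this, Multiset.map_id]
    simp only [ha', hmapB]
    rw [Multiset.filter_cons, if_pos (by omega : 0 < L), Multiset.filter_add]
    rw [Multiset.filter_eq_self.mpr hepos]
    rw [Multiset.filter_eq_nil.mpr (fun a ha => by rw [Multiset.eq_of_mem_replicate ha]; omega)]
    rw [add_zero, Multiset.singleton_add, hcons]


lemma psiCore_spec (n : ℕ) (hn : 1 ≤ n) (m : ℤ) (s : Multiset ℕ) (hv : Valid n m s) :
    ((psiCore n m s).1 = m + 1 ∨ (psiCore n m s).1 = m - 1) ∧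
    Valid n (psiCore n m s).1 (psiCore n m s).2 ∧
    psiCore n (psiCore n m s).1 (psiCore n m s).2 = (m, s) := by
  rcases le_or_gt ((s.sup : ℤ) + 3 * m) (Multiset.card s) with h | h
  · obtain ⟨h1, h2, h3⟩ := psiCore_caseA n hn m s hv h
    refine ⟨Or.inl h1, ?_, ?_⟩ <;> rw [h1]
    · exact h2
    · exact h3
  · obtain ⟨h1, h2, h3⟩ := psiCore_caseB n hn m s hv (not_le.mpr h)
    refine ⟨Or.inr h1, ?_, ?_⟩ <;> rw [h1]
    · exact h2
    · exact h3

lemma sign_succ (m : ℤ) : (-1 : ℤ) ^ (m + 1).natAbs = -((-1 : ℤ) ^ m.natAbs) := by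
  rcases Int.even_or_odd m with he | ho
  · rw [Odd.neg_one_pow (by rw [Int.natAbs_odd]; exact he.add_one),
      Even.neg_one_pow (by rwa [Int.natAbs_even])]
  · rw [Even.neg_one_pow (by rw [Int.natAbs_even]; exact ho.add_one),
      Odd.neg_one_pow (by rwa [Int.natAbs_odd])]
    norm_num

lemma sign_pred (m : ℤ) : (-1 : ℤ) ^ (m - 1).natAbs = -((-1 : ℤ) ^ m.natAbs) := by
  have h := sign_succ (m - 1)
  rw [sub_add_cancel] at h
  rw [h]; ring

/-- the finset of partition multisets of `n - pent m` -/
noncomputable def bSet (n : ℕ) (m : ℤ) : Finset (Multiset ℕ) :=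
  (Finset.univ : Finset (Nat.Partition ((n : ℤ) - pent m).toNat)).image Nat.Partition.parts

lemma mem_bSet {n : ℕ} {m : ℤ} (hm : 0 ≤ (n : ℤ) - pent m) {s : Multiset ℕ} :
    s ∈ bSet n m ↔ Valid n m s := by
  rw [bSet, Finset.mem_image]
  constructor
  · rintro ⟨p, -, rfl⟩
    refine ⟨fun x hx => p.parts_pos hx, ?_⟩
    rw [p.parts_sum, Int.toNat_of_nonneg hm]
  · rintro ⟨h1, h2⟩
    have h3 : ((((n : ℤ) - pent m).toNat : ℕ) : ℤ) = (n : ℤ) - pent m :=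
      Int.toNat_of_nonneg hm
    exact ⟨⟨s, fun {i} hi => h1 i hi, by omega⟩, Finset.mem_univ _, rfl⟩

lemma card_bSet (n : ℕ) (m : ℤ) :
    (bSet n m).card = Fintype.card (Nat.Partition ((n : ℤ) - pent m).toNat) := by
  rw [bSet, Finset.card_image_of_injective _ (fun p q h => Nat.Partition.ext h),
    Finset.card_univ]

end MacMahon

/-- MacMahon's recurrence: for `n ≥ 1`,
`∑_{m ∈ ℤ} (-1)^m p(n - m(3m-1)/2) = 0`, where `p(k) = 0` for `k < 0`.
(Terms with generalized pentagonal number `m(3m-1)/2 > n` vanish, so the sum may be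
taken over `-n ≤ m ≤ n`.) -/
theorem macmahon_recurrence (n : ℕ) (hn : 1 ≤ n) :
    ∑ m ∈ Finset.Icc (-(n : ℤ)) (n : ℤ),
      (-1 : ℤ) ^ m.natAbs * partitionExt ((n : ℤ) - m * (3 * m - 1) / 2) = 0 := by
  classical
  set G : ℤ → Finset (Multiset ℕ) :=
    fun m => if 0 ≤ (n : ℤ) - MacMahon.pent m then MacMahon.bSet n m else ∅ with hG
  have hterm : ∀ m ∈ Finset.Icc (-(n : ℤ)) (n : ℤ),
      (-1 : ℤ) ^ m.natAbs * partitionExt ((n : ℤ) - m * (3 * m - 1) / 2)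
        = ∑ _s ∈ G m, (-1 : ℤ) ^ m.natAbs := by
    intro m _
    rw [Finset.sum_const, show (n : ℤ) - m * (3 * m - 1) / 2 = (n : ℤ) - MacMahon.pent m from rfl]
    by_cases h : 0 ≤ (n : ℤ) - MacMahon.pent m
    · rw [hG]
      simp only [if_pos h]
      rw [partitionExt, if_pos h, MacMahon.card_bSet, nsmul_eq_mul, mul_comm]
    · rw [hG]
      simp only [if_neg h]
      rw [partitionExt, if_neg h]
      simp
  rw [Finset.sum_congr rfl hterm, Finset.sum_sigma']
  have hmem : ∀ a : Σ _ : ℤ, Multiset ℕ,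
      a ∈ (Finset.Icc (-(n : ℤ)) (n : ℤ)).sigma G ↔ MacMahon.Valid n a.1 a.2 := by
    rintro ⟨m, s⟩
    rw [Finset.mem_sigma, Finset.mem_Icc]
    dsimp only
    constructor
    · rintro ⟨hm, hs⟩
      simp only [hG] at hs
      by_cases h : 0 ≤ (n : ℤ) - MacMahon.pent m
      · rw [if_pos h] at hs
        exact (MacMahon.mem_bSet h).mp hs
      · rw [if_neg h] at hs
        exact absurd hs (Finset.notMem_empty _)
    · intro hv
      have h0 : 0 ≤ (n : ℤ) - MacMahon.pent m := by
        have h2 := hv.2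
        have h3 : (0 : ℤ) ≤ (s.sum : ℤ) := Int.natCast_nonneg _
        omega
      have habs := MacMahon.natAbs_le_pent m
      refine ⟨by omega, ?_⟩
      simp only [hG, if_pos h0]
      exact (MacMahon.mem_bSet h0).mpr hv
  refine Finset.sum_involution
    (fun a _ => ⟨(MacMahon.psiCore n a.1 a.2).1, (MacMahon.psiCore n a.1 a.2).2⟩)
    ?_ ?_
    (fun a ha => (hmem ⟨(MacMahon.psiCore n a.1 a.2).1, (MacMahon.psiCore n a.1 a.2).2⟩).mpr
      (MacMahon.psiCore_spec n hn a.1 a.2 ((hmem a).mp ha)).2.1)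
    ?_
  · intro a ha
    obtain ⟨hor, _, _⟩ := MacMahon.psiCore_spec n hn a.1 a.2 ((hmem a).mp ha)
    rcases hor with h | h
    · show (-1:ℤ) ^ a.1.natAbs + (-1:ℤ) ^ (MacMahon.psiCore n a.1 a.2).1.natAbs = 0
      rw [h, MacMahon.sign_succ]; ring
    · show (-1:ℤ) ^ a.1.natAbs + (-1:ℤ) ^ (MacMahon.psiCore n a.1 a.2).1.natAbs = 0
      rw [h, MacMahon.sign_pred]; ring
  · intro a ha _
    obtain ⟨hor, _, _⟩ := MacMahon.psiCore_spec n hn a.1 a.2 ((hmem a).mp ha)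
    intro hEq
    have h1 : (MacMahon.psiCore n a.1 a.2).1 = a.1 := congrArg Sigma.fst hEq
    omega
  · intro a ha
    obtain ⟨_, _, hinv⟩ := MacMahon.psiCore_spec n hn a.1 a.2 ((hmem a).mp ha)
    show (⟨(MacMahon.psiCore n (MacMahon.psiCore n a.1 a.2).1 (MacMahon.psiCore n a.1 a.2).2).1,
      (MacMahon.psiCore n (MacMahon.psiCore n a.1 a.2).1 (MacMahon.psiCore n a.1 a.2).2).2⟩ :
        Σ _ : ℤ, Multiset ℕ) = a
    rw [hinv]
end

section
/- The n-th Bernoulli number satisfies B_n = Σ_{K=0}^{n} (−1)^K Σ_{q_1,...,q_K ≥ 1, q_1+···+q_K = n} (1/((q_1+1)···(q_K+1))) · n!/(q_1!···q_K!), where the inner sum is over compositions of n into K positive parts. -/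
open PowerSeries Finset
open scoped Nat

/-- The auxiliary series `f = (exp - 1)/X - 1 = ∑_{q ≥ 1} z^q/(q+1)!`. -/
private noncomputable def auxF : PowerSeries ℚ :=
  PowerSeries.mk fun q => if q = 0 then 0 else (1 : ℚ) / ((q + 1)! : ℚ)

private lemma coeff_auxF (q : ℕ) :
    coeff q auxF = if q = 0 then 0 else (1 : ℚ) / ((q + 1)! : ℚ) := coeff_mk _ _

private lemma X_mul_one_add_auxF : (X : ℚ⟦X⟧) * (1 + auxF) = exp ℚ - 1 := by
  ext n
  cases n with
  | zero =>
      simp [coeff_exp, Nat.factorial]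
  | succ n =>
      rw [coeff_succ_X_mul]
      simp only [map_add, map_sub, coeff_exp, coeff_auxF, coeff_one]
      rcases Nat.eq_zero_or_pos n with rfl | hn
      · norm_num [Nat.factorial]
      · have h1 : n ≠ 0 := hn.ne'
        have h2 : n + 1 ≠ 0 := by omega
        simp [h1, h2, one_div, Algebra.algebraMap_self]

private lemma bernoulli_mul_one_add_auxF :
    bernoulliPowerSeries ℚ * (1 + auxF) = 1 := by
  have hX : (X : ℚ⟦X⟧) ≠ 0 := X_ne_zero
  apply mul_left_cancel₀ hX
  rw [mul_one]
  calc X * (bernoulliPowerSeries ℚ * (1 + auxF))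
      = bernoulliPowerSeries ℚ * (X * (1 + auxF)) := by ring
    _ = bernoulliPowerSeries ℚ * (exp ℚ - 1) := by rw [X_mul_one_add_auxF]
    _ = X := bernoulliPowerSeries_mul_exp_sub_one ℚ

private lemma coeff_pow_tuple (ψ : ℚ⟦X⟧) (K n : ℕ) :
    coeff n (ψ ^ K) =
      ∑ q ∈ Finset.Nat.antidiagonalTuple K n, ∏ i, coeff (q i) ψ := by
  rw [coeff_pow]
  refine Finset.sum_bij' (fun l _ => fun i : Fin K => l i)
    (fun q _ => Finsupp.onFinset (range K)
      (fun m => if h : m < K then q ⟨m, h⟩ else 0) ?_) ?_ ?_ ?_ ?_ ?_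
  · intro m hm
    rw [mem_range]
    by_contra h
    simp [h] at hm
  · intro l hl
    rw [mem_finsuppAntidiag] at hl
    rw [Finset.Nat.mem_antidiagonalTuple]
    rw [← hl.1]
    exact (Finset.sum_range fun i => l i).symm
  · intro q hq
    rw [Finset.Nat.mem_antidiagonalTuple] at hq
    rw [mem_finsuppAntidiag]
    constructor
    · rw [Finsupp.coe_onFinset, ← hq]
      rw [Finset.sum_range (fun m => if h : m < K then q ⟨m, h⟩ else 0)]
      apply Finset.sum_congr rfl
      intro i _
      simp [i.isLt]
    · intro m hm
      rw [Finsupp.mem_support_iff, Finsupp.onFinset_apply] at hm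
      rw [mem_range]
      by_contra h
      simp [h] at hm
  · intro l hl
    dsimp only
    rw [mem_finsuppAntidiag] at hl
    ext m
    simp only [Finsupp.onFinset_apply]
    split_ifs with h
    · rfl
    · symm
      by_contra hne
      have := hl.2 (Finsupp.mem_support_iff.mpr hne)
      rw [mem_range] at this
      exact h this
  · intro q hq
    funext i
    simp [i.isLt]
  · intro l hl
    dsimp only
    rw [Finset.prod_range]

private lemma multinomial_term (K n : ℕ) (q : Fin K → ℕ) (hq : ∑ i, q i = n) :
    (n ! : ℚ) * ∏ i, (1 : ℚ) / (((q i + 1)! : ℕ) : ℚ) =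
      (∏ i : Fin K, (1 : ℚ) / ((q i : ℚ) + 1)) * (Nat.multinomial Finset.univ q : ℚ) := by
  have hspec := Nat.multinomial_spec Finset.univ q
  rw [hq] at hspec
  have hcast : (n ! : ℚ) = (∏ i, ((q i)! : ℚ)) * (Nat.multinomial Finset.univ q : ℚ) := by
    rw [← hspec]; push_cast; ring
  have hfac : ∀ i : Fin K, ((q i + 1)! : ℚ) = ((q i : ℚ) + 1) * ((q i)! : ℚ) := by
    intro i
    rw [Nat.factorial_succ]
    push_cast
    ring
  have h1 : ∀ i : Fin K, ((q i : ℚ) + 1) ≠ 0 := by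
    intro i; positivity
  have h2 : ∀ i : Fin K, ((q i)! : ℚ) ≠ 0 := by
    intro i; exact_mod_cast (Nat.factorial_pos (q i)).ne'
  calc (n ! : ℚ) * ∏ i, (1 : ℚ) / ((q i + 1)!)
      = ((∏ i, ((q i)! : ℚ)) * (Nat.multinomial Finset.univ q : ℚ)) *
          ∏ i, ((1 : ℚ) / ((q i : ℚ) + 1) * ((1 : ℚ) / ((q i)! : ℚ))) := by
        rw [hcast]
        congr 1
        apply Finset.prod_congr rfl
        intro i _
        rw [hfac i, one_div, mul_inv, one_div, one_div]
    _ = ((∏ i, ((q i)! : ℚ)) * ∏ i, (1 : ℚ) / ((q i)! : ℚ)) *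
          ((∏ i : Fin K, (1 : ℚ) / ((q i : ℚ) + 1)) *
            (Nat.multinomial Finset.univ q : ℚ)) := by
        rw [Finset.prod_mul_distrib]; ring
    _ = (∏ i : Fin K, (1 : ℚ) / ((q i : ℚ) + 1)) *
          (Nat.multinomial Finset.univ q : ℚ) := by
        rw [← Finset.prod_mul_distrib]
        rw [Finset.prod_congr rfl fun i _ => mul_one_div_cancel (h2 i)]
        simp

/-- `B_n = ∑_{K=0}^n (-1)^K ∑_{compositions (q_1,…,q_K) of n}
(1/((q_1+1)⋯(q_K+1))) · n!/(q_1!⋯q_K!)`. -/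
theorem bernoulli_eq_sum_compositions (n : ℕ) :
    bernoulli n =
      ∑ K ∈ Finset.range (n + 1), (-1 : ℚ) ^ K *
        ∑ q ∈ (Finset.Nat.antidiagonalTuple K n).filter (fun q => ∀ i, 1 ≤ q i),
          (∏ i : Fin K, (1 : ℚ) / ((q i : ℚ) + 1)) * (Nat.multinomial Finset.univ q : ℚ) := by
  -- coefficient of the Bernoulli power series
  have hB : coeff n (bernoulliPowerSeries ℚ) = bernoulli n / (n ! : ℚ) := by
    simp [bernoulliPowerSeries, coeff_mk, Algebra.algebraMap_self]
  -- truncated geometric series expansion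
  have hgeom : (∑ K ∈ range (n + 1), (-auxF) ^ K) * (1 + auxF)
      = 1 - (-auxF) ^ (n + 1) := by
    have := geom_sum_mul (-auxF) (n + 1)
    linear_combination -this
  have hsum : (∑ K ∈ range (n + 1), (-auxF) ^ K)
      = bernoulliPowerSeries ℚ - bernoulliPowerSeries ℚ * (-auxF) ^ (n + 1) := by
    calc ∑ K ∈ range (n + 1), (-auxF) ^ K
        = bernoulliPowerSeries ℚ * (1 + auxF) * (∑ K ∈ range (n + 1), (-auxF) ^ K) := by
          rw [bernoulli_mul_one_add_auxF, one_mul]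
      _ = bernoulliPowerSeries ℚ * ((∑ K ∈ range (n + 1), (-auxF) ^ K) * (1 + auxF)) := by ring
      _ = bernoulliPowerSeries ℚ * (1 - (-auxF) ^ (n + 1)) := by rw [hgeom]
      _ = bernoulliPowerSeries ℚ - bernoulliPowerSeries ℚ * (-auxF) ^ (n + 1) := by ring
  -- the high-order term has vanishing nth coefficient
  have hvanish : coeff n (bernoulliPowerSeries ℚ * (-auxF) ^ (n + 1)) = 0 := by
    have hdvd : (X : ℚ⟦X⟧) ∣ -auxF := by
      rw [X_dvd_iff, map_neg, neg_eq_zero, ← coeff_zero_eq_constantCoeff_apply, coeff_auxF]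
      simp
    have : (X : ℚ⟦X⟧) ^ (n + 1) ∣ bernoulliPowerSeries ℚ * (-auxF) ^ (n + 1) :=
      Dvd.dvd.mul_left (pow_dvd_pow_of_dvd hdvd (n + 1)) _
    exact X_pow_dvd_iff.mp this n (Nat.lt_succ_self n)
  -- coefficient of the truncated geometric series
  have hkey : (bernoulli n : ℚ) / n ! =
      ∑ K ∈ range (n + 1), (-1 : ℚ) ^ K * coeff n (auxF ^ K) := by
    rw [← hB]
    have := congrArg (coeff n) hsum
    rw [map_sub, hvanish, sub_zero, map_sum] at this
    rw [← this]
    apply Finset.sum_congr rfl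
    intro K _
    rw [neg_pow]
    have : ((-1 : ℚ⟦X⟧) ^ K) = PowerSeries.C ((-1 : ℚ) ^ K) := by
      rw [map_pow, map_neg, map_one]
    rw [this, coeff_C_mul]
  -- express coefficient of auxF ^ K as a sum over compositions
  have hfK : ∀ K, coeff n (auxF ^ K) =
      ∑ q ∈ (Finset.Nat.antidiagonalTuple K n).filter (fun q => ∀ i, 1 ≤ q i),
        ∏ i, (1 : ℚ) / ((q i + 1)!) := by
    intro K
    rw [coeff_pow_tuple]
    rw [← Finset.sum_filter_of_ne (p := fun q => ∀ i, 1 ≤ q i)]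
    · apply Finset.sum_congr rfl
      intro q hq
      rw [Finset.mem_filter] at hq
      apply Finset.prod_congr rfl
      intro i _
      rw [coeff_auxF, if_neg (by have := hq.2 i; omega)]
    · intro q _ hne i
      by_contra h
      apply hne
      apply Finset.prod_eq_zero (Finset.mem_univ i)
      rw [coeff_auxF, if_pos (by omega)]
  -- put everything together
  have hn : (n ! : ℚ) ≠ 0 := by exact_mod_cast (Nat.factorial_pos n).ne'
  have := hkey
  rw [div_eq_iff hn] at this
  rw [this, Finset.sum_mul]
  apply Finset.sum_congr rfl
  intro K _
  rw [hfK K, mul_assoc]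
  congr 1
  rw [Finset.sum_mul]
  apply Finset.sum_congr rfl
  intro q hq
  rw [Finset.mem_filter, Finset.Nat.mem_antidiagonalTuple] at hq
  rw [mul_comm]
  exact multinomial_term K n q hq.1
end

section
/- For n ≠ 1, the Bernoulli number satisfies B_n = (1/(2 − 2^n)) Σ_{K=0}^{⌊n/2⌋} (−1)^K Σ_{q_1,...,q_K ≥ 1, 2q_1+···+2q_K = n} (1/((2q_1+1)···(2q_K+1))) · n!/((2q_1)!···(2q_K)!), a sum over compositions of n into even parts. -/
open PowerSeries Finset

noncomputable def Sser : PowerSeries ℚ :=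
  PowerSeries.mk fun n => if Even n then (1 : ℚ) / (Nat.factorial (n + 1)) else 0

noncomputable def Aser : PowerSeries ℚ :=
  PowerSeries.mk fun n => (2 - 2 ^ n) * bernoulli n / (Nat.factorial n)

lemma two_eq_C : (2 : ℚ⟦X⟧) = PowerSeries.C (R := ℚ) 2 := (map_ofNat (PowerSeries.C (R := ℚ)) 2).symm

lemma Aser_eq : Aser = 2 * bernoulliPowerSeries ℚ - rescale 2 (bernoulliPowerSeries ℚ) := by
  ext n
  rw [map_sub, two_eq_C, coeff_C_mul, coeff_rescale]
  simp only [Aser, bernoulliPowerSeries, coeff_mk, Algebra.algebraMap_self, RingHom.id_apply]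
  ring

lemma rescale2_bps : rescale (2:ℚ) (bernoulliPowerSeries ℚ) * (exp ℚ ^ 2 - 1) = 2 * X := by
  have h := bernoulliPowerSeries_mul_exp_sub_one ℚ
  have h2 := congrArg (rescale (2:ℚ)) h
  rw [map_mul, map_sub, map_one, rescale_X] at h2
  rw [exp_pow_eq_rescale_exp, show ((2:ℕ):ℚ) = (2:ℚ) by norm_num, h2, ← two_eq_C]

lemma Aser_mul : Aser * (exp ℚ - rescale (-1 : ℚ) (exp ℚ)) = 2 * X := by
  have hE : exp ℚ * rescale (-1:ℚ) (exp ℚ) = 1 := exp_mul_exp_neg_eq_one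
  have hEne : (exp ℚ) ≠ 0 := by
    intro h
    have := congrArg (PowerSeries.constantCoeff (R := ℚ)) h
    rw [constantCoeff_exp, map_zero] at this
    norm_num at this
  apply mul_right_cancel₀ hEne
  have hB := bernoulliPowerSeries_mul_exp_sub_one ℚ
  have hR := rescale2_bps
  calc Aser * (exp ℚ - rescale (-1 : ℚ) (exp ℚ)) * exp ℚ
      = Aser * (exp ℚ ^ 2 - exp ℚ * rescale (-1:ℚ) (exp ℚ)) := by ring
    _ = Aser * (exp ℚ ^ 2 - 1) := by rw [hE]
    _ = 2 * (bernoulliPowerSeries ℚ * (exp ℚ - 1)) * (exp ℚ + 1)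
        - rescale 2 (bernoulliPowerSeries ℚ) * (exp ℚ ^ 2 - 1) := by rw [Aser_eq]; ring
    _ = 2 * X * (exp ℚ + 1) - 2 * X := by rw [hB, hR]
    _ = 2 * X * exp ℚ := by ring

lemma sinh_eq : exp ℚ - rescale (-1 : ℚ) (exp ℚ) = 2 * (X * Sser) := by
  ext n
  rw [map_sub, coeff_rescale, PowerSeries.coeff_exp, two_eq_C, coeff_C_mul]
  simp only [Algebra.algebraMap_self, RingHom.id_apply]
  cases n with
  | zero => simp
  | succ m =>
    rw [PowerSeries.coeff_succ_X_mul]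
    simp only [Sser, coeff_mk]
    rcases Nat.even_or_odd m with he | ho
    · rw [if_pos he, (Odd.neg_one_pow (Even.add_one he))]
      push_cast
      ring
    · rw [if_neg (by simpa using ho), Even.neg_one_pow (Odd.add_one ho)]
      ring

lemma Aser_mul_Sser : Aser * Sser = 1 := by
  have h := Aser_mul
  rw [sinh_eq] at h
  have hX : (2 * X : ℚ⟦X⟧) ≠ 0 := by
    intro h0
    have := congrArg (PowerSeries.coeff (R := ℚ) 1) h0
    rw [two_eq_C, coeff_C_mul, PowerSeries.coeff_X, map_zero] at this
    norm_num at this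
  apply mul_left_cancel₀ hX
  rw [mul_one]
  linear_combination h

lemma X_sq_dvd : (X : ℚ⟦X⟧) ^ 2 ∣ (1 - Sser) := by
  rw [X_pow_dvd_iff]
  intro m hm
  interval_cases m <;> simp [Sser, Nat.factorial]

lemma coeff_Aser_sum (n : ℕ) :
    (PowerSeries.coeff (R := ℚ) n) Aser
      = ∑ K ∈ range (n / 2 + 1), (PowerSeries.coeff (R := ℚ) n) ((1 - Sser) ^ K) := by
  set M := n / 2 + 1 with hM
  have hg : (∑ K ∈ range M, (1 - Sser) ^ K) * Sser = 1 - (1 - Sser) ^ M := by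
    have h := geom_sum_mul (1 - Sser) M
    linear_combination -h
  have key : Aser = (∑ K ∈ range M, (1 - Sser) ^ K) + Aser * (1 - Sser) ^ M := by
    calc Aser = Aser * ((∑ K ∈ range M, (1 - Sser) ^ K) * Sser + (1 - Sser) ^ M) := by
          rw [hg]; ring
      _ = (Aser * Sser) * (∑ K ∈ range M, (1 - Sser) ^ K) + Aser * (1 - Sser) ^ M := by ring
      _ = _ := by rw [Aser_mul_Sser]; ring
  have hz : (PowerSeries.coeff (R := ℚ) n) (Aser * (1 - Sser) ^ M) = 0 := by
    have hdvd : (X : ℚ⟦X⟧) ^ (2 * M) ∣ Aser * (1 - Sser) ^ M := by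
      have h1 := pow_dvd_pow_of_dvd X_sq_dvd M
      rw [← pow_mul] at h1
      exact Dvd.dvd.mul_left h1 Aser
    exact X_pow_dvd_iff.mp hdvd n (by omega)
  rw [key]
  rw [map_add, map_sum, hz, add_zero]


lemma coeff_one_sub (j : ℕ) :
    (PowerSeries.coeff (R := ℚ) j) (1 - Sser)
      = if Even j ∧ 1 ≤ j then -(1 / ((Nat.factorial (j + 1) : ℚ))) else 0 := by
  rw [map_sub, PowerSeries.coeff_one]
  simp only [Sser, coeff_mk]
  rcases eq_or_ne j 0 with rfl | hj
  · norm_num [Nat.factorial]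
  · rw [if_neg hj]
    by_cases he : Even j
    · rw [if_pos he, if_pos ⟨he, Nat.one_le_iff_ne_zero.mpr hj⟩]; ring
    · rw [if_neg he, if_neg (by tauto)]; ring

lemma inner_eq (n K : ℕ) :
    ((n.factorial : ℕ) : ℚ) * (PowerSeries.coeff (R := ℚ) n) ((1 - Sser) ^ K)
    = (-1 : ℚ) ^ K * ∑ q ∈ (Fintype.piFinset fun _ : Fin K => Finset.range (n + 1)).filter
        (fun q => (∀ i, 1 ≤ q i) ∧ ∑ i : Fin K, 2 * q i = n),
      (∏ i : Fin K, (1 : ℚ) / (2 * (q i : ℚ) + 1)) *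
        (Nat.multinomial Finset.univ (fun i => 2 * q i) : ℚ) := by
  classical
  rw [PowerSeries.coeff_pow]
  rw [← Finset.sum_filter_of_ne (s := finsuppAntidiag (range K) n)
    (p := fun l => ∀ i ∈ range K, Even (l i) ∧ 1 ≤ l i)
    (f := fun l => ∏ i ∈ range K, (PowerSeries.coeff (R := ℚ) (l i)) (1 - Sser))
    (by
      intro l _ hne i hi
      have hc : (PowerSeries.coeff (R := ℚ) (l i)) (1 - Sser) ≠ 0 := by
        intro h0
        exact hne (Finset.prod_eq_zero hi h0)
      rw [coeff_one_sub] at hc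
      by_contra hcc
      rw [if_neg hcc] at hc
      exact hc rfl)]
  have hbij : ∑ l ∈ (finsuppAntidiag (range K) n).filter
        (fun l => ∀ i ∈ range K, Even (l i) ∧ 1 ≤ l i),
        ∏ i ∈ range K, (PowerSeries.coeff (R := ℚ) (l i)) (1 - Sser)
      = ∑ q ∈ (Fintype.piFinset fun _ : Fin K => Finset.range (n + 1)).filter
          (fun q => (∀ i, 1 ≤ q i) ∧ ∑ i : Fin K, 2 * q i = n),
        ∏ i : Fin K, (PowerSeries.coeff (R := ℚ) (2 * q i)) (1 - Sser) := by
    apply Finset.sum_nbij' (i := fun l (i : Fin K) => l i / 2)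
      (j := fun q => Finsupp.onFinset (range K)
        (fun j => if h : j < K then 2 * q ⟨j, h⟩ else 0)
        (by intro j hj; rw [mem_range]; by_contra hc; exact hj (dif_neg hc)))
    · -- hi : forward membership
      intro l hl
      rw [Finset.mem_filter, mem_finsuppAntidiag] at hl
      obtain ⟨⟨hsum, hsupp⟩, hP⟩ := hl
      have hle : ∀ i : Fin K, l i ≤ n := by
        intro i
        rw [← hsum]
        exact Finset.single_le_sum (f := fun j => l j) (fun j _ => Nat.zero_le _)
          (mem_range.mpr i.isLt)
      rw [Finset.mem_filter]
      refine ⟨Fintype.mem_piFinset.mpr fun i => mem_range.mpr (by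
        show l i / 2 < n + 1
        have := hle i; omega), fun i => ?_, ?_⟩
      · show 1 ≤ l i / 2
        obtain ⟨he, h1⟩ := hP i (mem_range.mpr i.isLt)
        obtain ⟨c, hc⟩ := he
        omega
      · have h2 : ∀ i : Fin K, 2 * (l i / 2) = l i := by
          intro i
          obtain ⟨he, _⟩ := hP i (mem_range.mpr i.isLt)
          obtain ⟨c, hc⟩ := he
          omega
        calc ∑ i : Fin K, 2 * (l i / 2) = ∑ i : Fin K, l i := by
              exact Finset.sum_congr rfl fun i _ => h2 i
          _ = ∑ i ∈ range K, l i := (Finset.sum_range fun j => l j).symm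
          _ = n := hsum
    · -- hj : backward membership
      intro q hq
      rw [Finset.mem_filter] at hq
      obtain ⟨_, h1, hsum⟩ := hq
      rw [Finset.mem_filter, mem_finsuppAntidiag]
      refine ⟨⟨?_, fun j hj => ?_⟩, fun i hi => ?_⟩
      · rw [show (Finset.sum (range K) fun j => Finsupp.onFinset (range K)
          (fun j => if h : j < K then 2 * q ⟨j, h⟩ else 0) _ j) = ∑ j ∈ range K,
          (if h : j < K then 2 * q ⟨j, h⟩ else 0) from rfl]
        rw [Finset.sum_range fun j => _]
        calc ∑ i : Fin K, (if h : (i : ℕ) < K then 2 * q ⟨i, h⟩ else 0)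
            = ∑ i : Fin K, 2 * q i := Finset.sum_congr rfl fun i _ => by
              rw [dif_pos i.isLt]
          _ = n := hsum
      · exact Finsupp.support_onFinset_subset hj
      · simp only [Finsupp.onFinset_apply] at *
        rw [mem_range] at hi
        rw [dif_pos hi]
        exact ⟨even_two_mul _, by have := h1 ⟨i, hi⟩; omega⟩
    · -- left inverse
      intro l hl
      rw [Finset.mem_filter, mem_finsuppAntidiag] at hl
      obtain ⟨⟨_, hsupp⟩, hP⟩ := hl
      ext j
      rw [Finsupp.onFinset_apply]
      by_cases hj : j < K
      · rw [dif_pos hj]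
        show 2 * (l j / 2) = l j
        obtain ⟨he, _⟩ := hP j (mem_range.mpr hj)
        obtain ⟨c, hc⟩ := he
        omega
      · rw [dif_neg hj]
        by_contra hc
        have : j ∈ l.support := Finsupp.mem_support_iff.mpr fun h => hc h.symm
        exact hj (mem_range.mp (hsupp this))
    · -- right inverse
      intro q _
      funext i
      rw [Finsupp.onFinset_apply, dif_pos i.isLt]
      simp only [Fin.eta]
      omega
    · -- values
      intro l hl
      rw [Finset.mem_filter, mem_finsuppAntidiag] at hl
      obtain ⟨_, hP⟩ := hl
      rw [Finset.prod_range fun j => (PowerSeries.coeff (R := ℚ) (l j)) (1 - Sser)]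
      refine Finset.prod_congr rfl fun i _ => ?_
      obtain ⟨he, _⟩ := hP i (mem_range.mpr i.isLt)
      obtain ⟨c, hc⟩ := he
      have h2 : 2 * ((fun i : Fin K => l (i : ℕ) / 2) i) = l i := by
        show 2 * (l (i : ℕ) / 2) = l i
        omega
      rw [h2]
  rw [hbij, Finset.mul_sum, Finset.mul_sum]
  refine Finset.sum_congr rfl fun q hq => ?_
  rw [Finset.mem_filter] at hq
  obtain ⟨_, h1, hsum⟩ := hq
  have hcoeff : ∀ i : Fin K, (PowerSeries.coeff (R := ℚ) (2 * q i)) (1 - Sser)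
      = (-1) * (1 / ((Nat.factorial (2 * q i + 1) : ℚ))) := by
    intro i
    rw [coeff_one_sub, if_pos ⟨even_two_mul _, by have := h1 i; omega⟩]
    ring
  rw [Finset.prod_congr rfl fun i _ => hcoeff i, Finset.prod_mul_distrib,
    Finset.prod_const, Finset.card_univ, Fintype.card_fin]
  have hmult : ((Nat.multinomial Finset.univ (fun i : Fin K => 2 * q i) : ℕ) : ℚ)
      * ∏ i : Fin K, ((Nat.factorial (2 * q i) : ℕ) : ℚ) = ((n.factorial : ℕ) : ℚ) := by
    have h := Nat.multinomial_spec Finset.univ (fun i : Fin K => 2 * q i)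
    have h2 : (∑ i : Fin K, 2 * q i) = n := hsum
    rw [h2] at h
    have := congrArg (fun m : ℕ => (m : ℚ)) h
    push_cast at this ⊢
    linarith [this]
  have hfac : ∏ i : Fin K, ((Nat.factorial (2 * q i + 1) : ℕ) : ℚ)
      = (∏ i : Fin K, (2 * (q i : ℚ) + 1)) * ∏ i : Fin K, ((Nat.factorial (2 * q i) : ℕ) : ℚ) := by
    rw [← Finset.prod_mul_distrib]
    refine Finset.prod_congr rfl fun i _ => ?_
    rw [Nat.factorial_succ]
    push_cast
    ring
  have hF : (∏ i : Fin K, ((Nat.factorial (2 * q i) : ℕ) : ℚ)) ≠ 0 :=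
    Finset.prod_ne_zero_iff.mpr fun i _ => Nat.cast_ne_zero.mpr (Nat.factorial_ne_zero _)
  have hP : (∏ i : Fin K, (2 * (q i : ℚ) + 1)) ≠ 0 :=
    Finset.prod_ne_zero_iff.mpr fun i _ => by positivity
  have hProd : ∏ i : Fin K, (1 : ℚ) / (2 * (q i : ℚ) + 1)
      = (∏ i : Fin K, (2 * (q i : ℚ) + 1))⁻¹ := by
    rw [← Finset.prod_inv_distrib]
    exact Finset.prod_congr rfl fun i _ => one_div _
  have hProd2 : ∏ i : Fin K, (1 : ℚ) / ((Nat.factorial (2 * q i + 1) : ℕ) : ℚ)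
      = (∏ i : Fin K, ((Nat.factorial (2 * q i + 1) : ℕ) : ℚ))⁻¹ := by
    rw [← Finset.prod_inv_distrib]
    exact Finset.prod_congr rfl fun i _ => one_div _
  rw [hProd, hProd2, hfac]
  field_simp
  linear_combination hmult.symm

/-- For `n ≠ 1`:
`B_n = (1/(2-2^n)) ∑_{K=0}^{⌊n/2⌋} (-1)^K ∑_{2q_1+⋯+2q_K = n, q_i ≥ 1}
(1/((2q_1+1)⋯(2q_K+1))) · n!/((2q_1)!⋯(2q_K)!)`. -/
theorem bernoulli_eq_sum_even_compositions (n : ℕ) (hn : n ≠ 1) :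
    bernoulli n =
      (1 / (2 - 2 ^ n : ℚ)) *
        ∑ K ∈ Finset.range (n / 2 + 1), (-1 : ℚ) ^ K *
          ∑ q ∈ (Fintype.piFinset fun _ : Fin K => Finset.range (n + 1)).filter
              (fun q => (∀ i, 1 ≤ q i) ∧ ∑ i : Fin K, 2 * q i = n),
            (∏ i : Fin K, (1 : ℚ) / (2 * (q i : ℚ) + 1)) *
              (Nat.multinomial Finset.univ (fun i => 2 * q i) : ℚ) := by
  have hne : (2 - 2 ^ n : ℚ) ≠ 0 := by
    rcases Nat.lt_or_ge n 2 with h | h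
    · interval_cases n
      · norm_num
      · exact absurd rfl hn
    · have h4 : (4 : ℚ) ≤ 2 ^ n := by
        calc (4 : ℚ) = 2 ^ 2 := by norm_num
          _ ≤ 2 ^ n := by
            apply pow_le_pow_right₀ (by norm_num) h
      intro h0
      linarith
  have hfac : ((n.factorial : ℕ) : ℚ) ≠ 0 := Nat.cast_ne_zero.mpr (Nat.factorial_ne_zero n)
  have hsum : ∑ K ∈ Finset.range (n / 2 + 1), (-1 : ℚ) ^ K *
          ∑ q ∈ (Fintype.piFinset fun _ : Fin K => Finset.range (n + 1)).filter
              (fun q => (∀ i, 1 ≤ q i) ∧ ∑ i : Fin K, 2 * q i = n),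
            (∏ i : Fin K, (1 : ℚ) / (2 * (q i : ℚ) + 1)) *
              (Nat.multinomial Finset.univ (fun i => 2 * q i) : ℚ)
      = ((n.factorial : ℕ) : ℚ) * (PowerSeries.coeff (R := ℚ) n) Aser := by
    rw [coeff_Aser_sum n, Finset.mul_sum]
    exact Finset.sum_congr rfl fun K _ => (inner_eq n K).symm
  rw [hsum]
  have hA : (PowerSeries.coeff (R := ℚ) n) Aser = (2 - 2 ^ n) * bernoulli n / (n.factorial : ℚ) := by
    simp [Aser]
  rw [hA]
  field_simp
end

section
/- For n > 1, the Euler number satisfies E_n = Σ_{N=1}^{⌊n/2⌋} (−1)^N Σ (n−1)!/((2q_1−1)!···(2q_{2N−1}−1)!), where the inner sum is over all compositions of n−1 into 2N−1 odd positive parts 2q_i − 1 with 1 ≤ q_i ≤ ⌊n/2⌋. -/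
/-- The power series `cosh z = ∑_{q} z^{2q}/(2q)!`. -/
noncomputable def coshPS : PowerSeries ℚ :=
  PowerSeries.mk fun q => if Even q then ((q.factorial : ℚ))⁻¹ else 0

/-- The Euler numbers, defined by `1/cosh z = ∑_q E_q z^q/q!` (so `E_n = 0` for odd `n`). -/
noncomputable def eulerNumber (n : ℕ) : ℚ :=
  (n.factorial : ℚ) * PowerSeries.coeff n coshPS⁻¹

open PowerSeries Finset

/-- The power series `sinh`. -/
noncomputable def sinhPS : PowerSeries ℚ :=
  PowerSeries.mk fun q => if Odd q then ((q.factorial : ℚ))⁻¹ else 0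

lemma coeff_coshPS (n : ℕ) :
    PowerSeries.coeff n coshPS = if Even n then ((n.factorial : ℚ))⁻¹ else 0 :=
  coeff_mk _ _

lemma coeff_sinhPS (n : ℕ) :
    PowerSeries.coeff n sinhPS = if Odd n then ((n.factorial : ℚ))⁻¹ else 0 :=
  coeff_mk _ _

lemma cosh_add_sinh : coshPS + sinhPS = PowerSeries.exp ℚ := by
  ext n
  rw [map_add, coeff_coshPS, coeff_sinhPS, coeff_exp]
  rcases Nat.even_or_odd n with h | h
  · simp [h, Nat.not_odd_iff_even.2 h, one_div, algebraMap]
  · simp [h, Nat.not_even_iff_odd.2 h, one_div, algebraMap]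

lemma cosh_sub_sinh : coshPS - sinhPS = PowerSeries.evalNegHom (PowerSeries.exp ℚ) := by
  ext n
  rw [map_sub, coeff_coshPS, coeff_sinhPS]
  show _ = PowerSeries.coeff n (PowerSeries.rescale (-1 : ℚ) (PowerSeries.exp ℚ))
  rw [coeff_rescale, coeff_exp]
  rcases Nat.even_or_odd n with h | h
  · simp [h, Nat.not_odd_iff_even.2 h, one_div, algebraMap, h.neg_one_pow]
  · simp [h, Nat.not_even_iff_odd.2 h, one_div, algebraMap, h.neg_one_pow]

lemma cosh_sq_sub_sinh_sq : coshPS ^ 2 - sinhPS ^ 2 = 1 := by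
  calc coshPS ^ 2 - sinhPS ^ 2 = (coshPS + sinhPS) * (coshPS - sinhPS) := by ring
  _ = PowerSeries.exp ℚ * PowerSeries.evalNegHom (PowerSeries.exp ℚ) := by
      rw [cosh_add_sinh, cosh_sub_sinh]
  _ = 1 := PowerSeries.exp_mul_exp_neg_eq_one

lemma constantCoeff_coshPS : PowerSeries.constantCoeff coshPS = 1 := by
  rw [← PowerSeries.coeff_zero_eq_constantCoeff_apply, coeff_coshPS]
  simp

lemma cosh_mul_inv : coshPS * coshPS⁻¹ = 1 :=
  PowerSeries.mul_inv_cancel _ (by rw [constantCoeff_coshPS]; norm_num)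

lemma inv_mul_cosh : coshPS⁻¹ * coshPS = 1 :=
  PowerSeries.inv_mul_cancel _ (by rw [constantCoeff_coshPS]; norm_num)

lemma derivCoshPS : d⁄dX ℚ coshPS = sinhPS := by
  ext n
  rw [PowerSeries.coeff_derivative, coeff_coshPS, coeff_sinhPS]
  rcases Nat.even_or_odd n with h | h
  · rw [if_neg (by simp [Nat.even_add_one, h]), if_neg (by simp [Nat.not_odd_iff_even.2 h])]
    ring
  · rw [if_pos (Nat.even_add_one.2 (by simpa using h)), if_pos h, Nat.factorial_succ]
    have h1 : ((n + 1 : ℕ) : ℚ) ≠ 0 := by positivity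
    have h2 : ((n.factorial : ℕ) : ℚ) ≠ 0 := Nat.cast_ne_zero.2 n.factorial_ne_zero
    push_cast
    field_simp

lemma X_dvd_sinh : (PowerSeries.X : ℚ⟦X⟧) ∣ sinhPS := by
  rw [PowerSeries.X_dvd_iff, ← PowerSeries.coeff_zero_eq_constantCoeff_apply, coeff_sinhPS]
  simp

/-- Key formal power series identity. -/
lemma key (M : ℕ) :
    (∑ N ∈ Finset.Icc 1 M, (-1 : ℚ⟦X⟧) ^ N * sinhPS ^ (2 * N - 1)) =
      d⁄dX ℚ coshPS⁻¹ + (-1) ^ M * sinhPS ^ (2 * M + 1) * (coshPS⁻¹) ^ 2 := by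
  have hCne : coshPS ^ 2 ≠ 0 := by
    intro h
    have := cosh_mul_inv
    rw [pow_eq_zero_iff (by norm_num)] at h
    rw [h, zero_mul] at this
    exact one_ne_zero this.symm
  apply mul_right_cancel₀ hCne
  rw [PowerSeries.derivative_inv', derivCoshPS]
  have hre : ∑ N ∈ Finset.Icc 1 M, (-1 : ℚ⟦X⟧) ^ N * sinhPS ^ (2 * N - 1)
      = -sinhPS * ∑ j ∈ Finset.range M, (-sinhPS ^ 2) ^ j := by
    rw [show Finset.Icc 1 M = Finset.Ico 1 (M + 1) from by rw [Finset.Ico_add_one_right_eq_Icc],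
      Finset.sum_Ico_eq_sum_range, Finset.mul_sum]
    apply Finset.sum_congr (by congr 1) fun j _ => ?_
    have h2 : 2 * (1 + j) - 1 = 2 * j + 1 := by omega
    rw [h2, neg_pow (sinhPS ^ 2), ← pow_mul]
    ring
  have hgeom : (∑ j ∈ Finset.range M, (-sinhPS ^ 2) ^ j) * coshPS ^ 2
      = 1 - (-1) ^ M * sinhPS ^ (2 * M) := by
    have hg := geom_sum_mul (-sinhPS ^ 2) M
    have hc : (-sinhPS ^ 2 - 1 : ℚ⟦X⟧) = -(coshPS ^ 2) := by
      rw [← cosh_sq_sub_sinh_sq]; ring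
    rw [hc] at hg
    have : (∑ j ∈ Finset.range M, (-sinhPS ^ 2) ^ j) * coshPS ^ 2
        = -((-sinhPS ^ 2) ^ M - 1) := by
      rw [← hg]; ring
    rw [this, neg_pow (sinhPS ^ 2), ← pow_mul]
    ring
  have e : (coshPS⁻¹) ^ 2 * coshPS ^ 2 = 1 := by
    rw [← mul_pow, inv_mul_cosh, one_pow]
  rw [hre]
  calc -sinhPS * (∑ j ∈ Finset.range M, (-sinhPS ^ 2) ^ j) * coshPS ^ 2
      = -sinhPS * ((∑ j ∈ Finset.range M, (-sinhPS ^ 2) ^ j) * coshPS ^ 2) := by ring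
    _ = -sinhPS * (1 - (-1) ^ M * sinhPS ^ (2 * M)) := by rw [hgeom]
    _ = -sinhPS * ((coshPS⁻¹) ^ 2 * coshPS ^ 2)
        + (-1) ^ M * (sinhPS ^ (2 * M) * sinhPS) * ((coshPS⁻¹) ^ 2 * coshPS ^ 2) := by
        rw [e]; ring
    _ = (-coshPS⁻¹ ^ 2 * sinhPS + (-1) ^ M * sinhPS ^ (2 * M + 1) * (coshPS⁻¹) ^ 2)
          * coshPS ^ 2 := by
        rw [pow_succ]; ring

/-- The inner sum equals `(n-1)! * coeff (n-1) (sinh ^ k)`. -/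
lemma sinh_inner_sum (n k : ℕ) (hn : 1 ≤ n) :
    ∑ q ∈ (Fintype.piFinset fun _ : Fin k => Finset.Icc 1 (n / 2)).filter
        (fun q => ∑ i : Fin k, (2 * q i - 1) = n - 1),
      (Nat.multinomial Finset.univ (fun i => 2 * q i - 1) : ℚ)
    = (((n - 1).factorial : ℕ) : ℚ) * PowerSeries.coeff (n - 1) (sinhPS ^ k) := by
  have hpow : sinhPS ^ k = ∏ _i : Fin k, sinhPS := by
    rw [Finset.prod_const, Finset.card_univ, Fintype.card_fin]
  rw [hpow, PowerSeries.coeff_prod, Finset.mul_sum]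
  rw [← Finset.sum_filter_add_sum_filter_not
    (Finset.finsuppAntidiag (Finset.univ : Finset (Fin k)) (n - 1))
    (fun l => ∀ i : Fin k, Odd (l i))]
  have hz : ∑ l ∈ (Finset.finsuppAntidiag (Finset.univ : Finset (Fin k)) (n - 1)).filter
      (fun l => ¬ ∀ i, Odd (l i)),
      (((n - 1).factorial : ℕ) : ℚ) * ∏ i, PowerSeries.coeff (l i) sinhPS = 0 := by
    apply Finset.sum_eq_zero
    intro l hl
    rw [Finset.mem_filter, not_forall] at hl
    obtain ⟨i, hi⟩ := hl.2
    rw [Finset.prod_eq_zero (Finset.mem_univ i) (by rw [coeff_sinhPS, if_neg hi]), mul_zero]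
  rw [hz, add_zero]
  apply Finset.sum_bij'
    (i := fun q _ => Finsupp.equivFunOnFinite.symm fun i => 2 * q i - 1)
    (j := fun l _ => fun i => (l i + 1) / 2)
  case hi =>
    intro q hq
    rw [Finset.mem_filter, Fintype.mem_piFinset] at hq
    obtain ⟨hq1, hq2⟩ := hq
    rw [Finset.mem_filter, Finset.mem_finsuppAntidiag]
    refine ⟨⟨?_, fun x _ => Finset.mem_univ x⟩, fun i => ?_⟩
    · simpa using hq2
    · have h1 := (Finset.mem_Icc.1 (hq1 i)).1
      have h2 : (2 * q i - 1) % 2 = 1 := by omega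
      simpa [Nat.odd_iff] using h2
  case hj =>
    intro l hl
    rw [Finset.mem_filter, Finset.mem_finsuppAntidiag] at hl
    obtain ⟨⟨hsum, _⟩, hodd⟩ := hl
    rw [Finset.mem_filter, Fintype.mem_piFinset]
    constructor
    · intro i
      have h1 : l i % 2 = 1 := Nat.odd_iff.1 (hodd i)
      have h2 : l i ≤ n - 1 := by
        rw [← hsum]
        exact Finset.single_le_sum (fun j _ => Nat.zero_le _) (Finset.mem_univ i)
      rw [Finset.mem_Icc]
      omega
    · rw [← hsum]
      apply Finset.sum_congr rfl
      intro i _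
      have h1 : l i % 2 = 1 := Nat.odd_iff.1 (hodd i)
      show 2 * ((l i + 1) / 2) - 1 = l i
      omega
  case left_neg =>
    intro q hq
    rw [Finset.mem_filter, Fintype.mem_piFinset] at hq
    funext i
    have h1 := (Finset.mem_Icc.1 (hq.1 i)).1
    simp only [Finsupp.coe_equivFunOnFinite_symm]
    omega
  case right_neg =>
    intro l hl
    rw [Finset.mem_filter] at hl
    apply Finsupp.ext
    intro i
    have h1 : l i % 2 = 1 := Nat.odd_iff.1 (hl.2 i)
    simp only [Finsupp.coe_equivFunOnFinite_symm]
    show 2 * ((l i + 1) / 2) - 1 = l i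
    omega
  case h =>
    intro q hq
    rw [Finset.mem_filter, Fintype.mem_piFinset] at hq
    obtain ⟨hq1, hq2⟩ := hq
    simp only [Finsupp.coe_equivFunOnFinite_symm]
    have hodd : ∀ i, Odd (2 * q i - 1) := by
      intro i
      have h1 := (Finset.mem_Icc.1 (hq1 i)).1
      rw [Nat.odd_iff]
      omega
    have hco : ∀ i : Fin k, PowerSeries.coeff (2 * q i - 1) sinhPS
        = (((2 * q i - 1).factorial : ℕ) : ℚ)⁻¹ := by
      intro i
      rw [coeff_sinhPS, if_pos (hodd i)]
    rw [Finset.prod_congr rfl (fun i _ => hco i), Finset.prod_inv_distrib, ← Nat.cast_prod]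
    have hspec := Nat.multinomial_spec Finset.univ (fun i => 2 * q i - 1)
    rw [hq2] at hspec
    have hne : ((∏ i : Fin k, (2 * q i - 1).factorial : ℕ) : ℚ) ≠ 0 := by
      rw [Nat.cast_ne_zero]
      exact Finset.prod_ne_zero_iff.2 fun i _ => Nat.factorial_ne_zero _
    rw [eq_comm, mul_comm, inv_mul_eq_iff_eq_mul₀ hne, ← Nat.cast_mul, hspec]

/-- For `n > 1`:
`E_n = ∑_{N=1}^{⌊n/2⌋} (-1)^N ∑ (n-1)!/((2q_1-1)!⋯(2q_{2N-1}-1)!)`, the inner sum over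
all tuples `1 ≤ q_i ≤ ⌊n/2⌋` with `∑ (2q_i - 1) = n - 1` (compositions of `n-1` into
`2N-1` odd positive parts). -/
theorem euler_eq_sum_odd_compositions (n : ℕ) (hn : 1 < n) :
    eulerNumber n =
      ∑ N ∈ Finset.Icc 1 (n / 2), (-1 : ℚ) ^ N *
        ∑ q ∈ (Fintype.piFinset fun _ : Fin (2 * N - 1) => Finset.Icc 1 (n / 2)).filter
            (fun q => ∑ i : Fin (2 * N - 1), (2 * q i - 1) = n - 1),
          (Nat.multinomial Finset.univ (fun i => 2 * q i - 1) : ℚ) := by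
  have hn1 : 1 ≤ n := hn.le
  have step1 : ∀ N ∈ Finset.Icc 1 (n / 2),
      (-1 : ℚ) ^ N *
        ∑ q ∈ (Fintype.piFinset fun _ : Fin (2 * N - 1) => Finset.Icc 1 (n / 2)).filter
            (fun q => ∑ i : Fin (2 * N - 1), (2 * q i - 1) = n - 1),
          (Nat.multinomial Finset.univ (fun i => 2 * q i - 1) : ℚ)
      = (((n - 1).factorial : ℕ) : ℚ) *
          PowerSeries.coeff (n - 1) ((-1 : ℚ⟦X⟧) ^ N * sinhPS ^ (2 * N - 1)) := by
    intro N _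
    rw [sinh_inner_sum n (2 * N - 1) hn1]
    have hC : (-1 : ℚ⟦X⟧) ^ N = PowerSeries.C ((-1 : ℚ) ^ N) := by
      rw [map_pow, map_neg, map_one]
    rw [hC, PowerSeries.coeff_C_mul]
    ring
  rw [Finset.sum_congr rfl step1, ← Finset.mul_sum, ← map_sum, key (n / 2), map_add]
  have hder : PowerSeries.coeff (n - 1) (d⁄dX ℚ coshPS⁻¹)
      = PowerSeries.coeff n coshPS⁻¹ * n := by
    have h := PowerSeries.coeff_derivative coshPS⁻¹ (n - 1)
    have h2 : n - 1 + 1 = n := by omega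
    rw [h2] at h
    rw [h, Nat.cast_sub hn1]
    push_cast
    ring
  have hzero : PowerSeries.coeff (n - 1)
      ((-1 : ℚ⟦X⟧) ^ (n / 2) * sinhPS ^ (2 * (n / 2) + 1) * (coshPS⁻¹) ^ 2) = 0 := by
    have hdvd : (PowerSeries.X : ℚ⟦X⟧) ^ (2 * (n / 2) + 1) ∣
        (-1 : ℚ⟦X⟧) ^ (n / 2) * sinhPS ^ (2 * (n / 2) + 1) * (coshPS⁻¹) ^ 2 :=
      ((pow_dvd_pow_of_dvd X_dvd_sinh _).mul_left _).mul_right _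
    exact PowerSeries.X_pow_dvd_iff.1 hdvd (n - 1) (by omega)
  rw [hder, hzero, add_zero, eulerNumber]
  have hfac : (n.factorial : ℚ) = (((n - 1).factorial : ℕ) : ℚ) * n := by
    rw [← Nat.mul_factorial_pred (by omega : n ≠ 0)]
    push_cast
    ring
  rw [hfac]
  ring
end

section
/- The Stirling numbers of the second kind satisfy S(n, n−p) = (n!/(n−p)!) · Σ over tuples (k_1,...,k_p) of non-negative integers with Σ_m m·k_m = p of binom(n−p, K) · (K!/(k_1!···k_p!)) · (1/2!)^{k_1} (1/3!)^{k_2} ··· (1/(p+1)!)^{k_p}, where K = k_1 + ··· + k_p, valid for 0 ≤ p ≤ n. -/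
/-- Stirling numbers of the second kind: `S(n,k)` is the number of partitions of an
`n`-element set into `k` non-empty blocks, given by the standard recurrence. -/
def stirling2 : ℕ → ℕ → ℕ
  | 0, 0 => 1
  | 0, _ + 1 => 0
  | _ + 1, 0 => 0
  | n + 1, k + 1 => (k + 1) * stirling2 n (k + 1) + stirling2 n k

open PowerSeries Finset

noncomputable def Eser : PowerSeries ℚ := PowerSeries.mk fun m => ((m+1).factorial : ℚ)⁻¹

lemma E_ode : Eser + X * (d⁄dX ℚ Eser) = 1 + X * Eser := by
  ext n
  cases n with
  | zero => simp [Eser]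
  | succ n =>
    simp only [map_add, coeff_succ_X_mul, coeff_derivative, Eser, coeff_mk, coeff_one,
      Nat.succ_ne_zero, if_false]
    have h1 : ((n+1).factorial : ℚ) ≠ 0 := Nat.cast_ne_zero.mpr (Nat.factorial_ne_zero _)
    have h4 : ((n:ℚ)+2) ≠ 0 := by positivity
    have h3 : ((n+1+1).factorial : ℚ)⁻¹ = ((n:ℚ)+2)⁻¹ * ((n+1).factorial : ℚ)⁻¹ := by
      rw [Nat.factorial_succ]; push_cast; rw [mul_inv, show ((n:ℚ)+1+1) = (n:ℚ)+2 by ring]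
    rw [h3]
    field_simp
    try ring
    try exact Or.inl trivial

lemma keyA (k p : ℕ) :
    ((p:ℚ)+1) * coeff (p+1) (Eser^(k+1)) =
      ((k:ℚ)+1) * (coeff (p+1) (Eser^k) + coeff p (Eser^(k+1))
        - coeff (p+1) (Eser^(k+1))) := by
  have hD : X * (d⁄dX ℚ (Eser^(k+1))) =
      (((k:ℕ)+1) : ℚ⟦X⟧) * (Eser^k + X * Eser^(k+1) - Eser^(k+1)) := by
    rw [Derivation.leibniz_pow]
    have h := E_ode
    simp only [Nat.add_sub_cancel, nsmul_eq_mul, smul_eq_mul]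
    push_cast
    linear_combination ((k:ℚ⟦X⟧)+1) * Eser^k * h
  have hc := congrArg (coeff (p+1)) hD
  rw [coeff_succ_X_mul, coeff_derivative,
    show (((k:ℕ)+1) : ℚ⟦X⟧) = C ((k:ℚ)+1) by simp, coeff_C_mul,
    map_sub, map_add, coeff_succ_X_mul] at hc
  linear_combination hc

lemma stirling2_eq_zero_of_lt : ∀ {n k : ℕ}, n < k → stirling2 n k = 0 := by
  intro n
  induction n with
  | zero => intro k hk; match k, hk with | k+1, _ => rfl
  | succ n ih =>
    intro k hk
    match k, hk with
    | k+1, hk =>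
      have h1 : n < k + 1 := by omega
      have h2 : n < k := by omega
      show (k + 1) * stirling2 n (k + 1) + stirling2 n k = 0
      rw [ih h1, ih h2, mul_zero]

lemma stirling2_self : ∀ k : ℕ, stirling2 k k = 1 := by
  intro k
  induction k with
  | zero => rfl
  | succ k ih =>
    show (k + 1) * stirling2 k (k + 1) + stirling2 k k = 1
    rw [stirling2_eq_zero_of_lt (Nat.lt_succ_self k), ih, mul_zero]

lemma constantCoeff_Eser : constantCoeff Eser = 1 := by
  simp [Eser, constantCoeff_mk]

lemma mainB : ∀ p k : ℕ, (stirling2 (k+p) k : ℚ) * (k.factorial : ℚ) =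
    ((k+p).factorial : ℚ) * coeff p (Eser^k) := by
  intro p
  induction p with
  | zero =>
    intro k
    rw [Nat.add_zero, stirling2_self, coeff_zero_eq_constantCoeff_apply, map_pow,
      constantCoeff_Eser, one_pow]
    norm_num
  | succ p ihp =>
    intro k
    induction k with
    | zero =>
      rw [Nat.zero_add, pow_zero, coeff_one, if_neg (Nat.succ_ne_zero p)]
      have : stirling2 (p+1) 0 = 0 := rfl
      rw [this]
      norm_num
    | succ k ihk =>
      have hidx : k + 1 + (p + 1) = (k + p + 1) + 1 := by omega
      rw [hidx]
      show (((k + 1) * stirling2 (k+p+1) (k + 1) + stirling2 (k+p+1) k : ℕ) : ℚ) * _ = _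
      have e1 : k + p + 1 = (k+1) + p := by omega
      have e2 : k + p + 1 = k + (p+1) := by omega
      push_cast
      rw [show stirling2 (k+p+1) (k+1) = stirling2 ((k+1)+p) (k+1) by rw [e1],
        show stirling2 (k+p+1) k = stirling2 (k+(p+1)) k by rw [e2]]
      have key := keyA k p
      have hf1 : ((k+1).factorial : ℚ) = (k+1) * k.factorial := by
        rw [Nat.factorial_succ]; push_cast; ring
      have hf2 : (((k+p+1)+1).factorial : ℚ) = ((k:ℚ)+(p:ℚ)+2) * (k+p+1).factorial := by
        rw [Nat.factorial_succ]; push_cast; ring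
      have hf3 : ((k+1+p).factorial : ℚ) = ((k+p+1).factorial : ℚ) := by rw [e1]
      have hf4 : ((k+(p+1)).factorial : ℚ) = ((k+p+1).factorial : ℚ) := by rw [e2]
      have i1 := ihp (k+1)
      rw [hf1, hf3] at i1
      rw [hf4] at ihk
      rw [hf2, hf1]
      linear_combination ((k:ℚ)+1) * i1 + ((k:ℚ)+1) * ihk - ((k+p+1).factorial : ℚ) * key

lemma coeff_pow_congr {f g : ℚ⟦X⟧} {p : ℕ} (h : ∀ i ≤ p, coeff i f = coeff i g)
    (N : ℕ) : ∀ i ≤ p, coeff i (f^N) = coeff i (g^N) := by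
  induction N with
  | zero => intro i _; rfl
  | succ N ih =>
    intro i hi
    rw [pow_succ, pow_succ, coeff_mul, coeff_mul]
    refine Finset.sum_congr rfl fun x hx => ?_
    replace hx : x.1 + x.2 = i := by simpa using hx
    have hx1 : x.1 ≤ p := le_trans (by omega) hi
    have hx2 : x.2 ≤ p := le_trans (by omega) hi
    rw [ih x.1 hx1, h x.2 hx2]

lemma coeff_E_pow (N p : ℕ) :
    coeff p (Eser ^ N) =
      ∑ k ∈ (piAntidiag (range (p+1)) N).filter
          (fun k => ∑ m ∈ range (p+1), m * k m = p),
        (Nat.multinomial (range (p+1)) k : ℚ) *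
          ∏ m ∈ range (p+1), (((m+1).factorial : ℚ)⁻¹) ^ k m := by
  classical
  set q : ℚ⟦X⟧ := ∑ m ∈ range (p+1), C (((m+1).factorial : ℚ)⁻¹) * X^m with hq
  have hagree : ∀ i ≤ p, coeff i Eser = coeff i q := by
    intro i hi
    rw [hq, map_sum]
    rw [Finset.sum_congr rfl (fun m _ => coeff_C_mul_X_pow _ _ _)]
    rw [Finset.sum_ite_eq (range (p+1)) i, if_pos (Finset.mem_range.mpr (by omega))]
    simp [Eser]
  rw [coeff_pow_congr hagree N p le_rfl]
  rw [hq, Finset.sum_pow_eq_sum_piAntidiag, map_sum, Finset.sum_filter]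
  refine Finset.sum_congr rfl fun k hk => ?_
  have hprod : ∏ m ∈ range (p+1), (C (((m+1).factorial : ℚ)⁻¹) * X^m) ^ k m
      = C (∏ m ∈ range (p+1), (((m+1).factorial : ℚ)⁻¹) ^ k m) *
        X ^ (∑ m ∈ range (p+1), m * k m) := by
    rw [map_prod, ← Finset.prod_pow_eq_pow_sum, ← Finset.prod_mul_distrib]
    refine Finset.prod_congr rfl fun m _ => ?_
    rw [mul_pow, map_pow, ← pow_mul]
  rw [hprod, show ((Nat.multinomial (range (p+1)) k : ℚ⟦X⟧)) * _ =
      C (Nat.multinomial (range (p+1)) k : ℚ) *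
        (C (∏ m ∈ range (p+1), (((m+1).factorial : ℚ)⁻¹) ^ k m) *
          X ^ (∑ m ∈ range (p+1), m * k m)) by rw [map_natCast]]
  rw [coeff_C_mul, coeff_C_mul, coeff_X_pow]
  by_cases hc : ∑ m ∈ range (p+1), m * k m = p
  · rw [if_pos hc, if_pos hc.symm]; ring
  · rw [if_neg hc, if_neg fun h => hc h.symm]; ring


def phiF (N p : ℕ) (k : Fin p → ℕ) : ℕ → ℕ := fun m =>
  if hm : 1 ≤ m ∧ m ≤ p then k ⟨m - 1, by omega⟩
  else if m = 0 then N - ∑ i : Fin p, k i else 0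

lemma phiF_succ {N p : ℕ} {k : Fin p → ℕ} (i : Fin p) : phiF N p k ((i : ℕ) + 1) = k i := by
  have hi := i.isLt
  rw [phiF, dif_pos ⟨by omega, by omega⟩]
  apply congrArg k
  apply Fin.ext
  simp

lemma phiF_succ' {N p : ℕ} {k : Fin p → ℕ} {j : ℕ} (hj : j < p) :
    phiF N p k (j + 1) = k ⟨j, hj⟩ := by
  have := phiF_succ (N := N) (k := k) ⟨j, hj⟩
  simpa using this

lemma phiF_zero {N p : ℕ} {k : Fin p → ℕ} : phiF N p k 0 = N - ∑ i : Fin p, k i := by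
  rw [phiF, dif_neg (by omega)]
  simp

lemma phiF_large {N p m : ℕ} {k : Fin p → ℕ} (h : p < m) : phiF N p k m = 0 := by
  rw [phiF, dif_neg (by omega), if_neg (by omega)]

lemma bridge (N p : ℕ) :
    ∑ k ∈ (piAntidiag (range (p+1)) N).filter
        (fun k => ∑ m ∈ range (p+1), m * k m = p),
      (Nat.multinomial (range (p+1)) k : ℚ) *
        ∏ m ∈ range (p+1), (((m+1).factorial : ℚ)⁻¹) ^ k m
    = ∑ k ∈ (Fintype.piFinset fun _ : Fin p => Finset.range (p + 1)).filter
        (fun k => ∑ i : Fin p, ((i : ℕ) + 1) * k i = p),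
      ((N.choose (∑ i : Fin p, k i) : ℚ)) * (Nat.multinomial Finset.univ k : ℚ) *
        ∏ i : Fin p, ((((i : ℕ) + 2).factorial : ℚ)⁻¹) ^ k i := by
  classical
  have hzero : ∀ k ∈ (Fintype.piFinset fun _ : Fin p => Finset.range (p + 1)).filter
      (fun k => ∑ i : Fin p, ((i : ℕ) + 1) * k i = p),
      ((N.choose (∑ i : Fin p, k i) : ℚ)) * (Nat.multinomial Finset.univ k : ℚ) *
        ∏ i : Fin p, ((((i : ℕ) + 2).factorial : ℚ)⁻¹) ^ k i ≠ 0 →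
      (∑ i : Fin p, k i) ≤ N := by
    intro k _ hne
    by_contra hlt
    rw [Nat.choose_eq_zero_of_lt (by omega), Nat.cast_zero, zero_mul, zero_mul] at hne
    exact hne rfl
  rw [← Finset.sum_filter_of_ne hzero]
  have hr : range (p+1) = insert 0 (Finset.image (·+1) (range p)) := by
    ext m; simp only [Finset.mem_range, Finset.mem_insert, Finset.mem_image]
    constructor
    · intro h
      rcases Nat.eq_zero_or_pos m with h0 | h0
      · exact Or.inl h0
      · exact Or.inr ⟨m - 1, by omega, by omega⟩
    · rintro (rfl | ⟨j, hj, rfl⟩) <;> omega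
  have h0notmem : (0 : ℕ) ∉ Finset.image (·+1) (range p) := by simp
  have hinj : ∀ x ∈ range p, ∀ y ∈ range p, x + 1 = y + 1 → x = y := fun x _ y _ h => by omega
  refine Finset.sum_nbij' (fun k' (i : Fin p) => k' ((i : ℕ) + 1)) (phiF N p) ?_ ?_ ?_ ?_ ?_
  · -- ψ maps into target
    intro k' hk'
    simp only [Finset.mem_filter, mem_piAntidiag] at hk'
    obtain ⟨⟨hsum, hsupp⟩, hwt⟩ := hk'
    have hwt' : ∑ i : Fin p, ((i : ℕ) + 1) * k' ((i : ℕ) + 1) = p := by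
      rw [Fin.sum_univ_eq_sum_range (fun j => (j + 1) * k' (j + 1)) p]
      rw [Finset.sum_range_succ' (fun m => m * k' m) p] at hwt
      simpa using hwt
    have hterm : ∀ i : Fin p, ((i : ℕ) + 1) * k' ((i : ℕ) + 1) ≤ p := by
      intro i
      exact le_trans (Finset.single_le_sum
        (f := fun i : Fin p => ((i : ℕ) + 1) * k' ((i : ℕ) + 1))
        (fun _ _ => Nat.zero_le _) (Finset.mem_univ i)) (le_of_eq hwt')
    have hK : ∑ i : Fin p, k' ((i : ℕ) + 1) ≤ N := by
      rw [Fin.sum_univ_eq_sum_range (fun j => k' (j + 1)) p, ← hsum,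
        Finset.sum_range_succ' k' p]
      omega
    simp only [Finset.mem_filter, Fintype.mem_piFinset, Finset.mem_range]
    refine ⟨⟨fun i => ?_, hwt'⟩, hK⟩
    have h1 := hterm i
    have h2 : k' ((i : ℕ) + 1) ≤ ((i : ℕ) + 1) * k' ((i : ℕ) + 1) :=
      Nat.le_mul_of_pos_left _ (by omega)
    omega
  · -- φ maps back
    intro k hk
    simp only [Finset.mem_filter, Fintype.mem_piFinset, Finset.mem_range] at hk
    obtain ⟨⟨_, hwt⟩, hKN⟩ := hk
    have hsum1 : ∑ j ∈ range p, phiF N p k (j + 1) = ∑ i : Fin p, k i := by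
      rw [← Fin.sum_univ_eq_sum_range (fun j => phiF N p k (j + 1)) p]
      exact Finset.sum_congr rfl fun i _ => phiF_succ i
    simp only [Finset.mem_filter, mem_piAntidiag]
    refine ⟨⟨?_, ?_⟩, ?_⟩
    · rw [Finset.sum_range_succ' (phiF N p k) p, hsum1, phiF_zero]
      omega
    · intro m hm
      by_contra hmem
      simp only [Finset.mem_range] at hmem
      exact hm (phiF_large (by omega))
    · rw [Finset.sum_range_succ' (fun m => m * phiF N p k m) p]
      simp only [zero_mul, add_zero]
      rw [← Fin.sum_univ_eq_sum_range (fun j => (j + 1) * phiF N p k (j + 1)) p]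
      have e3 : ∑ i : Fin p, (((i : ℕ) + 1) * phiF N p k ((i : ℕ) + 1))
          = ∑ i : Fin p, ((i : ℕ) + 1) * k i :=
        Finset.sum_congr rfl fun i _ => by rw [phiF_succ i]
      rw [e3]
      exact hwt
  · -- left inverse : φ (ψ k') = k'
    intro k' hk'
    simp only [Finset.mem_filter, mem_piAntidiag] at hk'
    obtain ⟨⟨hsum, hsupp⟩, hwt⟩ := hk'
    funext m
    rcases Nat.lt_or_ge m (p+1) with hm | hm
    · rcases Nat.eq_zero_or_pos m with rfl | h0
      · rw [phiF_zero]
        beta_reduce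
        have h1 : ∑ i : Fin p, k' ((i : ℕ) + 1) = ∑ j ∈ range p, k' (j + 1) :=
          Fin.sum_univ_eq_sum_range (fun j => k' (j + 1)) p
        rw [Finset.sum_range_succ' k' p] at hsum
        omega
      · have hj : m - 1 < p := by omega
        have h2 := phiF_succ' (N := N) (k := fun i : Fin p => k' ((i : ℕ) + 1)) hj
        simp only at h2
        rw [show (m - 1) + 1 = m by omega] at h2
        exact h2
    · rw [phiF_large (by omega)]
      by_contra hne
      have := hsupp m (fun h => hne h.symm)
      simp only [Finset.mem_range] at this
      omega
  · -- right inverse : ψ (φ k) = k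
    intro k _
    funext i
    exact phiF_succ i
  · -- values agree
    intro k' hk'
    simp only [Finset.mem_filter, mem_piAntidiag] at hk'
    obtain ⟨⟨hsum, hsupp⟩, hwt⟩ := hk'
    have hreidx : ∑ i : Fin p, k' ((i : ℕ) + 1) = ∑ j ∈ range p, k' (j + 1) :=
      Fin.sum_univ_eq_sum_range (fun j => k' (j + 1)) p
    have hsum' : k' 0 + ∑ j ∈ range p, k' (j + 1) = N := by
      rw [Finset.sum_range_succ' k' p] at hsum
      omega
    have himg_sum : ∑ m ∈ Finset.image (·+1) (range p), k' m = ∑ j ∈ range p, k' (j + 1) :=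
      Finset.sum_image hinj
    have himg_prod : ∏ m ∈ Finset.image (·+1) (range p), (k' m).factorial
        = ∏ j ∈ range p, (k' (j + 1)).factorial :=
      Finset.prod_image hinj
    have hmult : Nat.multinomial (range (p+1)) k'
        = N.choose (∑ j ∈ range p, k' (j + 1)) *
          Nat.multinomial Finset.univ (fun i : Fin p => k' ((i : ℕ) + 1)) := by
    -- multinomial split
      rw [hr, Nat.multinomial_insert h0notmem, himg_sum]
      congr 1
      · rw [hsum']
        rw [show k' 0 = N - ∑ j ∈ range p, k' (j + 1) by omega]
        exact Nat.choose_symm (by omega)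
      · rw [Nat.multinomial, Nat.multinomial, himg_sum, himg_prod, hreidx,
          ← Fin.prod_univ_eq_prod_range (fun j => (k' (j + 1)).factorial) p]
    have hprd : ∏ m ∈ range (p+1), (((m+1).factorial : ℚ)⁻¹) ^ k' m
        = ∏ i : Fin p, ((((i : ℕ) + 2).factorial : ℚ)⁻¹) ^ k' ((i : ℕ) + 1) := by
      rw [Finset.prod_range_succ' (fun m => (((m+1).factorial : ℚ)⁻¹) ^ k' m) p]
      rw [← Fin.prod_univ_eq_prod_range (fun j => (((j+1+1).factorial : ℚ)⁻¹) ^ k' (j + 1)) p]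
      norm_num
    rw [hmult, hprd, hreidx]
    push_cast
    ring

/-- `S(n, n-p) = (n!/(n-p)!) ∑_{∑ m k_m = p} C(n-p, K) · K!/(k_1!⋯k_p!) ·
(1/2!)^{k_1}⋯(1/(p+1)!)^{k_p}`, where `K = ∑ k_m`, for `0 ≤ p ≤ n`. -/
theorem stirling2_eq_sum_partitions (n p : ℕ) (hp : p ≤ n) :
    (stirling2 n (n - p) : ℚ) =
      ((n.factorial : ℚ) / ((n - p).factorial : ℚ)) *
        ∑ k ∈ (Fintype.piFinset fun _ : Fin p => Finset.range (p + 1)).filter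
            (fun k => ∑ i : Fin p, ((i : ℕ) + 1) * k i = p),
          ((n - p).choose (∑ i : Fin p, k i) : ℚ) *
            (Nat.multinomial Finset.univ k : ℚ) *
            ∏ i : Fin p, ((((i : ℕ) + 2).factorial : ℚ)⁻¹) ^ k i := by
  have hn : (n - p) + p = n := by omega
  have hB := mainB p (n - p)
  rw [hn, coeff_E_pow, bridge] at hB
  have hf : (((n - p).factorial : ℚ)) ≠ 0 := Nat.cast_ne_zero.mpr (Nat.factorial_ne_zero _)
  rw [div_mul_eq_mul_div, eq_div_iff hf]
  linear_combination hB
end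

section
/- The signed Stirling numbers of the first kind satisfy s(n, n−p) = ((n−1)!/(n−p−1)!) · Σ over tuples (k_1,...,k_p) of non-negative integers with Σ_m m·k_m = p of binom(n+K−1, K) · (K!/(k_1!···k_p!)) · (−1/2!)^{k_1} (−1/3!)^{k_2} ··· (−1/(p+1)!)^{k_p}, where K = k_1+···+k_p, valid for 0 ≤ p ≤ n−1. -/
/-- The signed Stirling numbers of the first kind: the coefficients in
`x(x-1)⋯(x-n+1) = ∑_k s(n,k) x^k`. -/
noncomputable def stirling1 (n k : ℕ) : ℚ :=
  (∏ i ∈ Finset.range n, (Polynomial.X - Polynomial.C (i : ℚ))).coeff k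

noncomputable section
namespace StirlingAux
open PowerSeries Finset
def G : ℚ⟦X⟧ := PowerSeries.mk fun m => (((m+1).factorial : ℚ))⁻¹
def F : ℚ⟦X⟧ := G⁻¹
def Y : ℚ⟦X⟧ := G - 1

lemma constantCoeff_G : PowerSeries.constantCoeff G = 1 := by
  have := PowerSeries.coeff_mk 0 fun m => (((m+1).factorial : ℚ))⁻¹
  simp [G, ← PowerSeries.coeff_zero_eq_constantCoeff_apply]

lemma G_mul_F : G * F = 1 := by
  apply PowerSeries.mul_inv_cancel
  rw [constantCoeff_G]; norm_num

lemma X_mul_G : (PowerSeries.X : ℚ⟦X⟧) * G = PowerSeries.exp ℚ - 1 := by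
  ext m
  rcases m with _ | m
  · simp [PowerSeries.exp]
  · rw [PowerSeries.coeff_succ_X_mul]
    simp [G, PowerSeries.coeff_exp, Nat.factorial]

lemma X_dvd_Y : (PowerSeries.X : ℚ⟦X⟧) ∣ Y := by
  rw [PowerSeries.X_dvd_iff]
  simp [Y, constantCoeff_G]

def b (n p : ℕ) : ℚ := PowerSeries.coeff p (F ^ n)

lemma b_zero (n : ℕ) : b n 0 = 1 := by
  rw [b, PowerSeries.coeff_zero_eq_constantCoeff, map_pow]
  rw [F, PowerSeries.constantCoeff_inv, constantCoeff_G]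
  norm_num

def c (n K : ℕ) : ℚ := (-1)^K * ((n + K - 1).choose K : ℚ)

lemma pascal (n m : ℕ) : c (n+1) (m+1) + c (n+1) m = c n (m+1) := by
  have h1 : n + 1 + (m + 1) - 1 = (n + m) + 1 := by omega
  have h2 : n + 1 + m - 1 = n + m := by omega
  have h3 : n + (m + 1) - 1 = n + m := by omega
  rw [c, c, c, h1, h2, h3, Nat.choose_succ_succ (n+m) m]
  push_cast
  ring

lemma stirling1_rec (n k : ℕ) :
    stirling1 (n+1) (k+1) = stirling1 n k - n * stirling1 n (k+1) := by
  unfold stirling1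
  rw [Finset.prod_range_succ, mul_sub, Polynomial.coeff_sub, Polynomial.coeff_mul_X,
    Polynomial.coeff_mul_C]
  ring

lemma stirling1_monic (n : ℕ) :
    ((Finset.range n).prod fun i => (Polynomial.X - Polynomial.C (i:ℚ))).Monic := by
  exact Polynomial.monic_prod_of_monic _ _ fun i _ => Polynomial.monic_X_sub_C _

lemma stirling1_natDegree (n : ℕ) :
    ((Finset.range n).prod fun i => (Polynomial.X - Polynomial.C (i:ℚ))).natDegree = n := by
  rw [Polynomial.natDegree_prod]
  · simp only [Polynomial.natDegree_X_sub_C]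
    simp
  · intro i _
    exact (Polynomial.monic_X_sub_C _).ne_zero

lemma stirling1_diag (n : ℕ) : stirling1 n n = 1 := by
  have h := stirling1_monic n
  have := stirling1_natDegree n
  have h2 := h.coeff_natDegree
  rw [this] at h2
  exact h2

lemma stirling1_of_lt {n k : ℕ} (h : n < k) : stirling1 n k = 0 := by
  unfold stirling1
  apply Polynomial.coeff_eq_zero_of_natDegree_lt
  rw [stirling1_natDegree]; exact h

lemma stirling1_zero (n : ℕ) (hn : 1 ≤ n) : stirling1 n 0 = 0 := by
  unfold stirling1
  rw [Polynomial.coeff_zero_eq_eval_zero]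
  rcases n with _ | m
  · omega
  · rw [Finset.prod_range_succ']
    simp

lemma derivative_exp' : d⁄dX ℚ (PowerSeries.exp ℚ) = PowerSeries.exp ℚ := by
  ext n
  rw [PowerSeries.coeff_derivative, PowerSeries.coeff_exp, PowerSeries.coeff_exp]
  have : ((n+1).factorial : ℚ) = (n.factorial : ℚ) * (n+1) := by
    rw [Nat.factorial_succ]; push_cast; ring
  simp only [Algebra.algebraMap_self, id, RingHom.id_apply]
  rw [this]
  have h1 : (n.factorial : ℚ) ≠ 0 := Nat.cast_ne_zero.mpr n.factorial_ne_zero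
  have h2 : ((n:ℚ)+1) ≠ 0 := by positivity
  field_simp

lemma X_mul_dG : (PowerSeries.X : ℚ⟦X⟧) * d⁄dX ℚ G = PowerSeries.X * G + 1 - G := by
  have h1 : d⁄dX ℚ ((PowerSeries.X : ℚ⟦X⟧) * G) = G + PowerSeries.X * d⁄dX ℚ G := by
    rw [Derivation.leibniz, PowerSeries.derivative_X]
    rw [smul_eq_mul, smul_eq_mul, mul_one]
    ring
  have h2 := congrArg (d⁄dX ℚ) X_mul_G
  rw [map_sub, derivative_exp', Derivation.map_one_eq_zero, sub_zero, h1] at h2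
  linear_combination h2 - X_mul_G

lemma X_mul_dF : (PowerSeries.X : ℚ⟦X⟧) * d⁄dX ℚ F = F - F^2 - PowerSeries.X * F := by
  have h1 : d⁄dX ℚ F = -F^2 * d⁄dX ℚ G := PowerSeries.derivative_inv' G
  have hF2G : F^2 * G = F := by
    rw [pow_two, mul_assoc, mul_comm F G, G_mul_F, mul_one]
  calc (PowerSeries.X : ℚ⟦X⟧) * d⁄dX ℚ F = -F^2 * (PowerSeries.X * d⁄dX ℚ G) := by
        rw [h1]; ring
    _ = -F^2 * (PowerSeries.X * G + 1 - G) := by rw [X_mul_dG]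
    _ = F - F^2 - PowerSeries.X * F := by
        rw [show -F^2 * (PowerSeries.X * G + 1 - G)
            = -(PowerSeries.X * (F^2*G)) - F^2 + F^2*G by ring, hF2G]
        ring

lemma b_rec (n q : ℕ) (hn : 1 ≤ n) :
    b (n+1) (q+1) = ((n : ℚ) - (q+1))/n * b n (q+1) - b n q := by
  obtain ⟨m, rfl⟩ : ∃ m, n = m + 1 := ⟨n - 1, by omega⟩
  have key : (PowerSeries.X : ℚ⟦X⟧) * d⁄dX ℚ (F^(m+1)) =
      (m+1) • (F^(m+1) - F^(m+2) - PowerSeries.X * F^(m+1)) := by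
    calc (PowerSeries.X : ℚ⟦X⟧) * d⁄dX ℚ (F^(m+1))
        = ((m+1 : ℕ) : ℚ⟦X⟧) * F^m * (PowerSeries.X * d⁄dX ℚ F) := by
          rw [Derivation.leibniz_pow]
          simp only [Nat.add_sub_cancel, nsmul_eq_mul, smul_eq_mul]
          ring
      _ = ((m+1 : ℕ) : ℚ⟦X⟧) * F^m * (F - F^2 - PowerSeries.X * F) := by rw [X_mul_dF]
      _ = (m+1) • (F^(m+1) - F^(m+2) - PowerSeries.X * F^(m+1)) := by
          simp only [nsmul_eq_mul]; ring
  have hc := congrArg (PowerSeries.coeff (q+1)) key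
  rw [PowerSeries.coeff_succ_X_mul, PowerSeries.coeff_derivative, map_nsmul, map_sub,
    map_sub, PowerSeries.coeff_succ_X_mul] at hc
  have hb : (PowerSeries.coeff (q+1)) (F ^ (m+1)) * ((q:ℚ)+1) =
      ((m:ℚ)+1) * (b (m+1) (q+1) - b (m+1+1) (q+1) - b (m+1) q) := by
    rw [hc, nsmul_eq_mul, b, b, b]
    push_cast
    ring
  have hb' := hb
  rw [show (PowerSeries.coeff (q+1)) (F ^ (m+1)) = b (m+1) (q+1) from rfl] at hb'
  have hm : ((m:ℚ)+1) ≠ 0 := by positivity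
  push_cast
  field_simp
  linear_combination hb'

lemma stirling1_eq_b : ∀ n p, p + 1 ≤ n →
    stirling1 n (n - p) = ((n-1).factorial : ℚ)/(((n-1-p).factorial : ℚ)) * b n p := by
  intro n
  induction n with
  | zero => intro p hp; omega
  | succ n IH =>
    intro p hp
    rcases Nat.eq_zero_or_pos p with hp0 | hppos
    · subst hp0
      simp only [Nat.sub_zero, Nat.add_sub_cancel]
      rw [stirling1_diag, b_zero, mul_one, div_self]
      exact Nat.cast_ne_zero.mpr n.factorial_ne_zero
    · obtain ⟨q, rfl⟩ : ∃ q, p = q + 1 := ⟨p - 1, by omega⟩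
      have hn1 : 1 ≤ n := by omega
      have hrec := b_rec n q hn1
      have h1 : n + 1 - (q + 1) = (n - (q+1)) + 1 := by omega
      rw [h1, stirling1_rec]
      rcases eq_or_lt_of_le hp with heq | hlt
      · -- q + 1 = n
        obtain rfl : n = q + 1 := by omega
        have I0 := IH q (by omega)
        rw [show q + 1 - q = 1 by omega, show q + 1 - 1 - q = 0 by omega,
          show q + 1 - 1 = q by omega] at I0
        rw [show q + 1 - (q+1) = 0 by omega, show 0 + 1 = 1 by omega,
          stirling1_zero _ hn1, I0,
          show q + 1 + 1 - 1 - (q + 1) = 0 by omega,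
          show q + 1 + 1 - 1 = q + 1 by omega, hrec]
        have h6 : ((q+1).factorial : ℚ) = ((q:ℚ)+1) * (q.factorial : ℚ) := by
          rw [Nat.factorial_succ]; push_cast; ring
        rw [h6, Nat.factorial_zero]
        have hq : ((q:ℚ)+1) ≠ 0 := by positivity
        push_cast
        field_simp
        ring
      · -- q + 2 ≤ n
        obtain ⟨a, rfl⟩ : ∃ a, n = q + 2 + a := ⟨n - q - 2, by omega⟩
        have e1 : q + 2 + a - (q + 1) = a + 1 := by omega
        rw [e1]
        have I1 := IH (q+1) (by omega)
        rw [e1, show q+2+a-1 = q+1+a by omega, show q+1+a-(q+1) = a by omega] at I1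
        have I0 := IH q (by omega)
        rw [show q+2+a-q = a+1+1 by omega, show q+2+a-1 = q+1+a by omega,
          show q+1+a-q = a+1 by omega] at I0
        rw [I1, I0, show q+2+a+1-1-(q+1) = a+1 by omega,
          show q+2+a+1-1 = q+2+a by omega, hrec]
        have f1 : ((q+2+a).factorial : ℚ) = ((q:ℚ)+2+a) * ((q+1+a).factorial : ℚ) := by
          rw [show q+2+a = (q+1+a)+1 by omega, Nat.factorial_succ]; push_cast; ring
        have f2 : ((a+1).factorial : ℚ) = ((a:ℚ)+1) * (a.factorial : ℚ) := by
          rw [Nat.factorial_succ]; push_cast; ring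
        rw [f1, f2]
        have hz1 : ((q:ℚ)+2+a) ≠ 0 := by positivity
        have hz2 : ((a:ℚ)+1) ≠ 0 := by positivity
        have hz3 : ((a.factorial : ℚ)) ≠ 0 := Nat.cast_ne_zero.mpr a.factorial_ne_zero
        have hz4 : (((q+1+a).factorial : ℚ)) ≠ 0 := Nat.cast_ne_zero.mpr (q+1+a).factorial_ne_zero
        push_cast
        field_simp
        ring

def S (p n : ℕ) : ℚ⟦X⟧ := ∑ K ∈ Finset.range (p+1), PowerSeries.C (c n K) * Y ^ K

lemma G_mul_S (p n : ℕ) :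
    (PowerSeries.X : ℚ⟦X⟧)^(p+1) ∣ G * S p (n+1) - S p n := by
  have hG : G = 1 + Y := by rw [Y]; ring
  have key : G * S p (n+1) - S p n = PowerSeries.C (c (n+1) p) * Y^(p+1) := by
    rw [S, S, hG, add_mul, one_mul, Finset.mul_sum]
    have h2 : ∀ K ∈ Finset.range (p+1), Y * (PowerSeries.C (c (n+1) K) * Y ^ K)
        = PowerSeries.C (c (n+1) K) * Y^(K+1) := fun K _ => by ring
    rw [Finset.sum_congr rfl h2, Finset.sum_range_succ
      (f := fun K => PowerSeries.C (c (n+1) K) * Y^(K+1))]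
    have h4 : (∑ K ∈ Finset.range (p+1), PowerSeries.C (c (n+1) K) * Y ^ K)
        - (∑ K ∈ Finset.range (p+1), PowerSeries.C (c n K) * Y ^ K)
        = ∑ K ∈ Finset.range (p+1),
            (PowerSeries.C (c (n+1) K) - PowerSeries.C (c n K)) * Y ^ K := by
      rw [← Finset.sum_sub_distrib]
      exact Finset.sum_congr rfl fun K _ => by ring
    have h5 : (∑ K ∈ Finset.range (p+1),
          (PowerSeries.C (c (n+1) K) - PowerSeries.C (c n K)) * Y ^ K)
        + ∑ K ∈ Finset.range p, PowerSeries.C (c (n+1) K) * Y^(K+1) = 0 := by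
      rw [Finset.sum_range_succ'
        (f := fun K => (PowerSeries.C (c (n+1) K) - PowerSeries.C (c n K)) * Y ^ K)]
      have c0 : c (n+1) 0 = c n 0 := by simp [c]
      rw [c0, sub_self, zero_mul, add_zero, ← Finset.sum_add_distrib]
      apply Finset.sum_eq_zero
      intro K hK
      have hpas : c (n+1) (K+1) - c n (K+1) + c (n+1) K = 0 := by
        linarith [pascal n K]
      calc (PowerSeries.C (c (n+1) (K+1)) - PowerSeries.C (c n (K+1))) * Y ^ (K+1)
            + PowerSeries.C (c (n+1) K) * Y^(K+1)
          = PowerSeries.C (c (n+1) (K+1) - c n (K+1) + c (n+1) K) * Y^(K+1) := by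
            rw [map_add, map_sub]; ring
        _ = 0 := by rw [hpas, map_zero, zero_mul]
    linear_combination h4 + h5
  rw [key]
  exact Dvd.dvd.mul_left (pow_dvd_pow_of_dvd X_dvd_Y (p+1)) _

lemma S_zero (p : ℕ) : S p 0 = 1 := by
  rw [S]
  rw [Finset.sum_eq_single 0]
  · simp [c]
  · intro K _ hK
    obtain ⟨m, rfl⟩ : ∃ m, K = m + 1 := ⟨K - 1, by omega⟩
    have : c 0 (m+1) = 0 := by
      simp only [c, Nat.zero_add, Nat.add_sub_cancel]
      rw [Nat.choose_eq_zero_of_lt (by omega)]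
      simp
    rw [this, map_zero, zero_mul]
  · intro h; simp at h

lemma G_pow_mul_S (p n : ℕ) :
    (PowerSeries.X : ℚ⟦X⟧)^(p+1) ∣ G^n * S p n - 1 := by
  induction n with
  | zero =>
    rw [pow_zero, one_mul, S_zero, sub_self]
    exact dvd_zero _
  | succ n IH =>
    have key : G^(n+1) * S p (n+1) - 1
        = G^n * (G * S p (n+1) - S p n) + (G^n * S p n - 1) := by ring
    rw [key]
    exact dvd_add ((G_mul_S p n).mul_left _) IH

lemma b_eq_sum_S (n p : ℕ) :
    b n p = ∑ K ∈ Finset.range (p+1), c n K * PowerSeries.coeff p (Y ^ K) := by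
  have hFG : F^n * G^n = 1 := by rw [← mul_pow, mul_comm F G, G_mul_F, one_pow]
  have key : S p n - F^n = F^n * (G^n * S p n - 1) := by
    linear_combination (-(S p n)) * hFG
  have hdvd : (PowerSeries.X : ℚ⟦X⟧)^(p+1) ∣ S p n - F^n := by
    rw [key]; exact (G_pow_mul_S p n).mul_left _
  have hc := PowerSeries.X_pow_dvd_iff.mp hdvd p (lt_add_one p)
  rw [map_sub, sub_eq_zero] at hc
  rw [b, ← hc, S, map_sum]
  exact Finset.sum_congr rfl fun K _ => by rw [PowerSeries.coeff_C_mul]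

def Z (p : ℕ) : ℚ⟦X⟧ :=
  ∑ i : Fin p, PowerSeries.C ((((i:ℕ)+2).factorial : ℚ))⁻¹ * PowerSeries.X ^ ((i:ℕ)+1)

lemma coeff_Y (m : ℕ) :
    PowerSeries.coeff m Y = if m = 0 then 0 else ((m+1).factorial : ℚ)⁻¹ := by
  rw [Y, map_sub, PowerSeries.coeff_one, G, PowerSeries.coeff_mk]
  rcases m with _ | m
  · simp
  · simp

lemma X_pow_dvd_Y_sub_Z (p : ℕ) : (PowerSeries.X : ℚ⟦X⟧)^(p+1) ∣ Y - Z p := by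
  rw [PowerSeries.X_pow_dvd_iff]
  intro m hm
  rw [map_sub, coeff_Y, Z, map_sum]
  simp only [PowerSeries.coeff_C_mul, PowerSeries.coeff_X_pow]
  rcases Nat.eq_zero_or_pos m with rfl | hmpos
  · simp
  · obtain ⟨j, rfl⟩ : ∃ j, m = j + 1 := ⟨m - 1, by omega⟩
    have hj : j < p := by omega
    rw [Finset.sum_eq_single (⟨j, hj⟩ : Fin p)]
    · simp
    · intro i _ hne
      have : ¬ (j + 1 = (i:ℕ) + 1) := by
        intro h
        apply hne
        apply Fin.ext
        simpa using h.symm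
      rw [if_neg this, mul_zero]
    · intro h; simp at h

lemma coeff_Y_pow (p K : ℕ) :
    PowerSeries.coeff p (Y ^ K) =
      ∑ k ∈ Finset.piAntidiag (Finset.univ : Finset (Fin p)) K,
        (Nat.multinomial Finset.univ k : ℚ) *
          (∏ i : Fin p, ((((i:ℕ)+2).factorial : ℚ)⁻¹) ^ k i) *
          (if (∑ i : Fin p, ((i:ℕ)+1) * k i) = p then 1 else 0) := by
  have hdvd : (PowerSeries.X : ℚ⟦X⟧)^(p+1) ∣ Y^K - (Z p)^K :=
    dvd_trans (X_pow_dvd_Y_sub_Z p) (sub_dvd_pow_sub_pow Y (Z p) K)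
  have hc := PowerSeries.X_pow_dvd_iff.mp hdvd p (lt_add_one p)
  rw [map_sub, sub_eq_zero] at hc
  rw [hc, Z, Finset.sum_pow_eq_sum_piAntidiag, map_sum]
  apply Finset.sum_congr rfl
  intro k hk
  have hprod : ∀ i : Fin p,
      (PowerSeries.C ((((i:ℕ)+2).factorial : ℚ))⁻¹ * PowerSeries.X ^ ((i:ℕ)+1)) ^ k i
      = PowerSeries.C (((((i:ℕ)+2).factorial : ℚ))⁻¹ ^ k i)
          * PowerSeries.X ^ (((i:ℕ)+1) * k i) := by
    intro i
    rw [mul_pow, ← map_pow, ← pow_mul]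
  rw [Finset.prod_congr rfl fun i _ => hprod i, Finset.prod_mul_distrib, ← map_prod,
    Finset.prod_pow_eq_pow_sum]
  rw [← nsmul_eq_mul, map_nsmul, PowerSeries.coeff_C_mul, PowerSeries.coeff_X_pow]
  rw [nsmul_eq_mul]
  by_cases h : (∑ i : Fin p, ((i:ℕ)+1) * k i) = p
  · rw [if_pos h, if_pos h.symm]
    ring
  · rw [if_neg h, if_neg fun hh => h hh.symm]
    ring

lemma sum_eq (n p : ℕ) :
    (∑ K ∈ Finset.range (p+1), c n K * PowerSeries.coeff p (Y ^ K)) =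
      ∑ k ∈ (Fintype.piFinset fun _ : Fin p => Finset.range (p + 1)).filter
          (fun k => ∑ i : Fin p, ((i : ℕ) + 1) * k i = p),
        ((n + (∑ i : Fin p, k i) - 1).choose (∑ i : Fin p, k i) : ℚ) *
          (Nat.multinomial Finset.univ k : ℚ) *
          ∏ i : Fin p, (-((((i : ℕ) + 2).factorial : ℚ)⁻¹)) ^ k i := by
  rw [← Finset.sum_fiberwise_of_maps_to (g := fun k : Fin p → ℕ => ∑ i, k i)
    (t := Finset.range (p+1)) ?hmaps]
  case hmaps =>
    intro k hk
    simp only [Finset.mem_filter, Fintype.mem_piFinset, Finset.mem_range] at hk ⊢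
    have h1 : ∀ i : Fin p, k i ≤ ((i:ℕ)+1) * k i := fun i =>
      Nat.le_mul_of_pos_left _ (by omega)
    calc ∑ i, k i ≤ ∑ i : Fin p, ((i:ℕ)+1) * k i := Finset.sum_le_sum fun i _ => h1 i
      _ = p := hk.2
      _ < p + 1 := lt_add_one p
  apply Finset.sum_congr rfl
  intro K hK
  rw [coeff_Y_pow, Finset.mul_sum]
  have hterm : ∀ k : Fin p → ℕ,
      c n K * ((Nat.multinomial Finset.univ k : ℚ) *
        (∏ i : Fin p, ((((i:ℕ)+2).factorial : ℚ)⁻¹) ^ k i) *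
        (if (∑ i : Fin p, ((i:ℕ)+1) * k i) = p then 1 else 0))
      = if (∑ i : Fin p, ((i:ℕ)+1) * k i) = p then
          c n K * ((Nat.multinomial Finset.univ k : ℚ) *
            (∏ i : Fin p, ((((i:ℕ)+2).factorial : ℚ)⁻¹) ^ k i))
        else 0 := by
    intro k
    by_cases h : (∑ i : Fin p, ((i:ℕ)+1) * k i) = p <;> simp [h]
  rw [Finset.sum_congr rfl fun k _ => hterm k, ← Finset.sum_filter]
  have hset : (Finset.piAntidiag (Finset.univ : Finset (Fin p)) K).filter
        (fun k => ∑ i : Fin p, ((i:ℕ)+1) * k i = p)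
      = ((Fintype.piFinset fun _ : Fin p => Finset.range (p + 1)).filter
          (fun k => ∑ i : Fin p, ((i : ℕ) + 1) * k i = p)).filter
          (fun k => ∑ i, k i = K) := by
    ext k
    simp only [Finset.mem_filter, Finset.mem_piAntidiag, Fintype.mem_piFinset,
      Finset.mem_range, Finset.mem_univ]
    constructor
    · rintro ⟨⟨hsum, -⟩, hw⟩
      refine ⟨⟨fun i => ?_, hw⟩, hsum⟩
      have h1 : ((i:ℕ)+1) * k i ≤ ∑ j : Fin p, ((j:ℕ)+1) * k j :=
        Finset.single_le_sum (f := fun j : Fin p => ((j:ℕ)+1) * k j)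
          (fun j _ => Nat.zero_le _) (Finset.mem_univ i)
      have h2 : k i ≤ ((i:ℕ)+1) * k i := Nat.le_mul_of_pos_left _ (by omega)
      omega
    · rintro ⟨⟨-, hw⟩, hsum⟩
      exact ⟨⟨hsum, fun i _ => trivial⟩, hw⟩
  rw [hset]
  apply Finset.sum_congr rfl
  intro k hk
  simp only [Finset.mem_filter] at hk
  rw [hk.2, c]
  have hneg : ∀ i : Fin p, (-((((i:ℕ)+2).factorial : ℚ)⁻¹)) ^ k i
      = (-1 : ℚ) ^ k i * ((((i:ℕ)+2).factorial : ℚ)⁻¹) ^ k i := fun i => by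
    rw [neg_pow]
  rw [Finset.prod_congr rfl fun i _ => hneg i, Finset.prod_mul_distrib,
    Finset.prod_pow_eq_pow_sum, hk.2]
  ring

end StirlingAux

/-- `s(n, n-p) = ((n-1)!/(n-p-1)!) ∑_{∑ m k_m = p} C(n+K-1, K) · K!/(k_1!⋯k_p!) ·
(-1/2!)^{k_1}⋯(-1/(p+1)!)^{k_p}`, where `K = ∑ k_m`, for `0 ≤ p ≤ n-1`. -/
theorem stirling1_eq_sum_partitions (n p : ℕ) (hp : p + 1 ≤ n) :
    stirling1 n (n - p) =
      (((n - 1).factorial : ℚ) / ((n - p - 1).factorial : ℚ)) *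
        ∑ k ∈ (Fintype.piFinset fun _ : Fin p => Finset.range (p + 1)).filter
            (fun k => ∑ i : Fin p, ((i : ℕ) + 1) * k i = p),
          ((n + (∑ i : Fin p, k i) - 1).choose (∑ i : Fin p, k i) : ℚ) *
            (Nat.multinomial Finset.univ k : ℚ) *
            ∏ i : Fin p, (-((((i : ℕ) + 2).factorial : ℚ)⁻¹)) ^ k i := by
  rw [StirlingAux.stirling1_eq_b n p hp, StirlingAux.b_eq_sum_S, StirlingAux.sum_eq,
    show n - 1 - p = n - p - 1 by omega]
end
end
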